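/- arXiv:0902.2524 — 5 statements merged into one kernel-verified Lean document; each statement's English description precedes it below -/
import Mathlib

section
/- For all x ∈ (0, ∞), ln(x + 1/2) − 1/x < ψ(x) < ln(x + e^{−γ}) − 1/x, where γ is the Euler–Mascheroni constant. -/
open Real Filter Set Topology

section PsiAux


lemma aux_log_ge {u : ℝ} (hu : 0 ≤ u) : u - u^2/2 ≤ Real.log (1+u) := by
  have key : ∀ v ∈ Ici (0:ℝ), HasDerivAt (fun w : ℝ => Real.log (1+w) - w + w^2/2)
      (1/(1+v) - 1 + v) v := by
    intro v hv
    have hv' : (0:ℝ) ≤ v := hv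
    have h1 : HasDerivAt (fun w : ℝ => 1 + w) 1 v := (hasDerivAt_id v).const_add 1
    have h2 : HasDerivAt (fun w : ℝ => Real.log (1+w)) (1/(1+v)) v := by
      simpa using h1.log (by positivity)
    have h3 : HasDerivAt (fun w : ℝ => w^2/2) v v := by
      simpa using ((hasDerivAt_pow 2 v).div_const 2)
    exact (h2.sub (hasDerivAt_id v)).add h3
  have mono : MonotoneOn (fun w : ℝ => Real.log (1+w) - w + w^2/2) (Ici 0) := by
    apply monotoneOn_of_deriv_nonneg (convex_Ici 0)
    · exact fun v hv => ((key v hv).continuousAt).continuousWithinAt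
    · intro v hv
      rw [interior_Ici] at hv
      exact ((key v (le_of_lt hv : (0:ℝ) ≤ v)).differentiableAt).differentiableWithinAt
    · intro v hv
      rw [interior_Ici] at hv
      rw [(key v (le_of_lt hv : (0:ℝ) ≤ v)).deriv]
      have hv' : (0:ℝ) < v := hv
      have : 1/(1+v) - 1 + v = v^2/(1+v) := by field_simp; ring
      rw [this]; positivity
  have h0 := mono (self_mem_Ici) (hu) hu
  simp only [Real.log_one, add_zero] at h0
  nlinarith [h0]

lemma aux_midpoint {y : ℝ} (hy : 1/2 < y) :
    1/y < Real.log (y + 1/2) - Real.log (y - 1/2) := by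
  set u : ℝ := 1/(2*y) with hu
  have hy0 : 0 < y := by linarith
  have hu0 : 0 < u := by positivity
  have hu1 : u < 1 := by
    rw [hu, div_lt_one (by linarith)]; linarith
  have key : ∀ v ∈ Ico (0:ℝ) 1, HasDerivAt (fun w : ℝ => Real.log (1+w) - Real.log (1-w) - 2*w)
      (1/(1+v) + 1/(1-v) - 2) v := by
    intro v hv
    obtain ⟨hv0, hv1⟩ := hv
    have h1 : HasDerivAt (fun w : ℝ => Real.log (1+w)) (1/(1+v)) v := by
      simpa using ((hasDerivAt_id v).const_add 1).log (by positivity)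
    have h2 : HasDerivAt (fun w : ℝ => Real.log (1-w)) (-(1/(1-v))) v := by
      have hd : HasDerivAt (fun w : ℝ => 1 - w) (-1) v := by
        exact (hasDerivAt_id' v).const_sub 1
      have hne : 1 - v ≠ 0 := by intro h; nlinarith
      have := hd.log hne
      convert this using 1
      field_simp
    have h3 : HasDerivAt (fun w : ℝ => 2*w) 2 v := by
      simpa using (hasDerivAt_id v).const_mul 2
    exact ((h1.sub h2).sub h3).congr_deriv (by ring)
  have smono : StrictMonoOn (fun w : ℝ => Real.log (1+w) - Real.log (1-w) - 2*w) (Ico 0 1) := by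
    apply strictMonoOn_of_deriv_pos (convex_Ico 0 1)
    · exact fun v hv => ((key v hv).continuousAt).continuousWithinAt
    · intro v hv
      rw [interior_Ico] at hv
      obtain ⟨hv0, hv1⟩ := hv
      rw [(key v ⟨le_of_lt hv0, hv1⟩).deriv]
      have h1 : (0:ℝ) < 1 + v := by linarith
      have h2 : (0:ℝ) < 1 - v := by linarith
      have : 1/(1+v) + 1/(1-v) - 2 = 2*v^2/((1+v)*(1-v)) := by field_simp; ring
      rw [this]; positivity
  have h0 := smono (left_mem_Ico.mpr one_pos) ⟨le_of_lt hu0, hu1⟩ hu0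
  simp only [Real.log_one, sub_self, zero_sub, mul_zero, sub_zero, add_zero] at h0
  have e1 : y + 1/2 = y * (1+u) := by rw [hu]; field_simp
  have e2 : y - 1/2 = y * (1-u) := by rw [hu]; field_simp
  have l1 : Real.log (y + 1/2) = Real.log y + Real.log (1+u) := by
    rw [e1, Real.log_mul (ne_of_gt hy0) (by positivity)]
  have l2 : Real.log (y - 1/2) = Real.log y + Real.log (1-u) := by
    rw [e2, Real.log_mul (ne_of_gt hy0) (by nlinarith)]
  have hyu : 1/y = 2*u := by rw [hu]; field_simp
  rw [l1, l2, hyu]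
  linarith [h0]

lemma summable_inv_sq {a : ℝ} (ha : 0 < a) : Summable (fun n : ℕ => 1/(a+n)^2) := by
  have h1 : Summable (fun n : ℕ => 1/((n:ℝ))^2) := summable_one_div_nat_pow.mpr (by norm_num)
  have h2 : Summable (fun n : ℕ => 1/((n:ℝ)+1)^2) := by
    have := (summable_nat_add_iff 1).mpr h1
    refine this.congr fun n => ?_
    push_cast; ring
  set m : ℝ := min a 1 with hm
  have hm0 : 0 < m := lt_min ha one_pos
  refine Summable.of_nonneg_of_le (fun n => by positivity) (fun n => ?_) (h2.mul_left (1/m^2))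
  have hle : m * ((n:ℝ)+1) ≤ a + n := by
    have h3 : m ≤ a := min_le_left _ _
    have h4 : m ≤ 1 := min_le_right _ _
    have h6 : m * (n:ℝ) ≤ n := by nlinarith [Nat.cast_nonneg (α := ℝ) n]
    nlinarith
  have h5 : 0 < m * ((n:ℝ)+1) := by positivity
  calc 1/(a+(n:ℝ))^2 ≤ 1/(m*((n:ℝ)+1))^2 := by
        apply one_div_le_one_div_of_le (by positivity)
        exact pow_le_pow_left₀ h5.le hle 2
    _ = 1/m^2 * (1/((n:ℝ)+1)^2) := by rw [mul_pow]; field_simp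

lemma summable_of_le_inv_sq {a : ℝ} (ha : 0 < a) {f : ℕ → ℝ} {C : ℝ}
    (h : ∀ n, |f n| ≤ C * (1/(a+n)^2)) : Summable f :=
  Summable.of_norm_bounded ((summable_inv_sq ha).mul_left C) (by simpa using h)


lemma tendsto_one_div_shift (y : ℝ) : Tendsto (fun N : ℕ => 1/(y+(N:ℝ))) atTop (𝓝 0) := by
  have h2 : Tendsto (fun N : ℕ => y+(N:ℝ)) atTop atTop :=
    tendsto_atTop_add_const_left _ y tendsto_natCast_atTop_atTop
  simpa [one_div, Pi.inv_def] using h2.inv_tendsto_atTop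

lemma hasSum_telescope {y : ℝ} (hy : 0 < y) :
    HasSum (fun n : ℕ => 1/(y+n) - 1/(y+n+1)) (1/y) := by
  have hnn : ∀ n : ℕ, 0 ≤ 1/(y+(n:ℝ)) - 1/(y+n+1) := by
    intro n
    have h1 : (0:ℝ) < y + n := by positivity
    have h2 : (0:ℝ) < y + n + 1 := by linarith
    have := one_div_le_one_div_of_le h1 (by linarith : y + (n:ℝ) ≤ y + n + 1)
    linarith
  have hsum : Summable (fun n : ℕ => 1/(y+(n:ℝ)) - 1/(y+n+1)) := by
    refine summable_of_le_inv_sq hy (C := 1) fun n => ?_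
    rw [abs_of_nonneg (hnn n), one_mul]
    have h1 : (0:ℝ) < y + n := by positivity
    have h2 : (0:ℝ) < y + n + 1 := by linarith
    rw [div_sub_div _ _ (ne_of_gt h1) (ne_of_gt h2)]
    rw [div_le_div_iff₀ (by positivity) (by positivity)]
    ring_nf
    nlinarith
  rw [hasSum_iff_tendsto_nat_of_summable_norm (by simpa [abs_of_nonneg, hnn] using hsum.abs)]
  have heq : ∀ N : ℕ, ∑ i ∈ Finset.range N, (1/(y+i) - 1/(y+i+1))
      = 1/y - 1/(y+N) := by
    intro N
    have h := Finset.sum_range_sub' (f := fun i : ℕ => 1/(y+(i:ℝ))) N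
    have h2 : ∑ i ∈ Finset.range N, (1/(y+(i:ℝ)) - 1/(y+(i:ℝ)+1))
        = ∑ i ∈ Finset.range N, (1/(y+(i:ℝ)) - 1/(y+((i+1:ℕ):ℝ))) := by
      apply Finset.sum_congr rfl; intro i _; push_cast; ring_nf
    rw [h2, h]
    norm_num
  simp only [heq]
  simpa using (tendsto_const_nhds (x := 1/y)).sub (tendsto_one_div_shift y)

noncomputable def P0 (y : ℝ) : ℝ := ∑' n : ℕ, 1/(y+n)^2
noncomputable def R0 (y : ℝ) : ℝ := ∑' n : ℕ, 1/(y+n)^3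

lemma summable_R0 {y : ℝ} (hy : 0 < y) : Summable (fun n : ℕ => 1/(y+n)^3) := by
  refine summable_of_le_inv_sq hy (C := 1/y) fun n => ?_
  have h1 : (0:ℝ) < y + n := by positivity
  rw [abs_of_nonneg (by positivity)]
  rw [div_mul_div_comm, one_mul]
  apply one_div_le_one_div_of_le (by positivity)
  nlinarith

lemma P0_pos {y : ℝ} (hy : 0 < y) : 0 < P0 y := by
  refine Summable.tsum_pos (summable_inv_sq hy) (fun n => by positivity) 0 ?_
  norm_num; positivity

lemma P0_shift {y : ℝ} (hy : 0 < y) : P0 y = 1/y^2 + P0 (y+1) := by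
  rw [P0, Summable.tsum_eq_zero_add (summable_inv_sq hy)]
  norm_num [P0]
  apply tsum_congr; intro n; push_cast; ring_nf

lemma R0_shift {y : ℝ} (hy : 0 < y) : R0 y = 1/y^3 + R0 (y+1) := by
  rw [R0, Summable.tsum_eq_zero_add (summable_R0 hy)]
  norm_num [R0]
  apply tsum_congr; intro n; push_cast; ring_nf

lemma P0_le {y : ℝ} (hy : 0 < y) : P0 y ≤ 1/y^2 + 1/y := by
  rw [P0_shift hy]
  have h1 : P0 (y+1) ≤ 1/y := by
    rw [← (hasSum_telescope hy).tsum_eq]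
    apply Summable.tsum_le_tsum _ (summable_inv_sq (by linarith)) (hasSum_telescope hy).summable
    intro n
    have h1 : (0:ℝ) < y + n := by positivity
    have h2 : (0:ℝ) < y + n + 1 := by linarith
    rw [div_sub_div _ _ (ne_of_gt h1) (ne_of_gt h2), div_le_div_iff₀ (by positivity) (by positivity)]
    ring_nf; nlinarith
  linarith

lemma P0_gt {y : ℝ} (hy : 0 < y) : 1/y + 1/(2*y^2) < P0 y := by
  have hshift : P0 (y+1) = P0 y - 1/y^2 := by rw [P0_shift hy]; ring
  have hsum2 : Summable (fun n : ℕ => (1/(y+n)^2 + 1/(y+n+1)^2)/2) := by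
    have h1 := summable_inv_sq hy
    have h2 : Summable (fun n : ℕ => 1/(y+(n:ℝ)+1)^2) := by
      refine (summable_inv_sq (by linarith : (0:ℝ) < y+1)).congr fun n => ?_
      ring_nf
    exact (h1.add h2).div_const 2
  have key : 1/y < ∑' n : ℕ, (1/(y+(n:ℝ))^2 + 1/(y+n+1)^2)/2 := by
    rw [← (hasSum_telescope hy).tsum_eq]
    refine Summable.tsum_lt_tsum (i := 0) (fun n => ?_) ?_ (hasSum_telescope hy).summable hsum2
    · have h1 : (0:ℝ) < y + n := by positivity
      have h2 : (0:ℝ) < y + n + 1 := by linarith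
      rw [div_sub_div _ _ (ne_of_gt h1) (ne_of_gt h2), div_add_div _ _ (by positivity) (by positivity),
        div_div, div_le_div_iff₀ (by positivity) (by positivity)]
      ring_nf; nlinarith [sq_nonneg ((y+(n:ℝ)) - (y+n+1))]
    · simp only [Nat.cast_zero, add_zero]
      have h1 : (0:ℝ) < y := hy
      have h2 : (0:ℝ) < y + 1 := by linarith
      rw [div_sub_div _ _ (ne_of_gt h1) (ne_of_gt h2), div_add_div _ _ (by positivity) (by positivity),
        div_div, div_lt_div_iff₀ (by positivity) (by positivity)]
      ring_nf; nlinarith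
  have heval : ∑' n : ℕ, (1/(y+(n:ℝ))^2 + 1/(y+n+1)^2)/2 = P0 y - 1/(2*y^2) := by
    have h2 : Summable (fun n : ℕ => 1/(y+(n:ℝ)+1)^2) := by
      refine (summable_inv_sq (by linarith : (0:ℝ) < y+1)).congr fun n => ?_
      ring_nf
    have e1 : ∑' n : ℕ, 1/(y+(n:ℝ)+1)^2 = P0 (y+1) := by
      rw [P0]; apply tsum_congr; intro n; ring_nf
    calc ∑' n : ℕ, (1/(y+(n:ℝ))^2 + 1/(y+n+1)^2)/2
        = (∑' n : ℕ, (1/(y+(n:ℝ))^2 + 1/(y+n+1)^2))/2 := by rw [tsum_div_const]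
      _ = ((P0 y) + P0 (y+1))/2 := by rw [Summable.tsum_add (summable_inv_sq hy) h2, e1]; rfl
      _ = P0 y - 1/(2*y^2) := by rw [hshift]; ring
  rw [heval] at key; linarith

lemma u_step {z : ℝ} (hz : 0 < z) :
    (P0 (z+1))^2 - 2*R0 (z+1) < (P0 z)^2 - 2*R0 z := by
  have h1 : P0 (z+1) = P0 z - 1/z^2 := by rw [P0_shift hz]; ring
  have h2 : R0 (z+1) = R0 z - 1/z^3 := by rw [R0_shift hz]; ring
  have h3 := P0_gt hz
  rw [h1, h2]
  have e : (P0 z - 1/z^2)^2 - 2*(R0 z - 1/z^3)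
      = (P0 z)^2 - 2*R0 z - (2*P0 z/z^2 - 2/z^3 - 1/z^4) := by
    field_simp; ring
  rw [e]
  have h6 : (1/z + 1/(2*z^2)) * (2/z^2) < P0 z * (2/z^2) :=
    mul_lt_mul_of_pos_right h3 (by positivity)
  have e2 : (1/z + 1/(2*z^2)) * (2/z^2) = 2/z^3 + 1/z^4 := by field_simp
  have e3 : P0 z * (2/z^2) = 2*P0 z/z^2 := by ring
  rw [e2, e3] at h6
  linarith

lemma R0_nonneg {y : ℝ} (hy : 0 < y) : 0 ≤ R0 y :=
  tsum_nonneg (fun n => by positivity)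

lemma R0_le {y : ℝ} (hy : 0 < y) : R0 y ≤ (1/y)^3 + (1/y)^2 := by
  have h1 : R0 y ≤ (1/y) * P0 y := by
    rw [R0, P0, ← tsum_mul_left]
    apply Summable.tsum_le_tsum _ (summable_R0 hy) ((summable_inv_sq hy).mul_left _)
    intro n
    have h1 : (0:ℝ) < y + n := by positivity
    rw [div_mul_div_comm, one_mul]
    apply one_div_le_one_div_of_le (by positivity)
    nlinarith
  have h2 := P0_le hy
  have h3 : (0:ℝ) < 1/y := by positivity
  have e : (1/y) * (1/y^2 + 1/y) = (1/y)^3 + (1/y)^2 := by field_simp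
  nlinarith [P0_pos hy]

lemma u_nonneg {y : ℝ} (hy : 0 < y) : 0 ≤ (P0 y)^2 - 2*R0 y := by
  have step : ∀ N : ℕ, (P0 (y+N))^2 - 2*R0 (y+N) ≤ (P0 y)^2 - 2*R0 y := by
    intro N
    induction N with
    | zero => simp
    | succ n ih =>
      have hz : (0:ℝ) < y + n := by positivity
      have := u_step hz
      have e : y + ((n:ℝ)+1) = (y+n) + 1 := by ring
      push_cast
      rw [e]
      linarith
  have lower : ∀ N : ℕ, -(2*((1/(y+(N:ℝ)))^3 + (1/(y+N))^2 + (1/(y+N))^3))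
      ≤ (P0 (y+N))^2 - 2*R0 (y+N) := by
    intro N
    have hz : (0:ℝ) < y + N := by positivity
    have hr1 := R0_le hz
    have hr2 := R0_nonneg hz
    have h7 : (0:ℝ) ≤ (1/(y+(N:ℝ)))^3 := by positivity
    linarith [sq_nonneg (P0 (y+(N:ℝ)))]
  have t0 : Tendsto (fun N : ℕ => 1/(y+(N:ℝ))) atTop (𝓝 0) := by
    have h2 : Tendsto (fun N : ℕ => y+(N:ℝ)) atTop atTop :=
      tendsto_atTop_add_const_left _ y tendsto_natCast_atTop_atTop
    simpa [one_div, Pi.inv_def] using h2.inv_tendsto_atTop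
  have tb : Tendsto (fun N : ℕ => -(2*((1/(y+(N:ℝ)))^3 + (1/(y+N))^2 + (1/(y+N))^3)))
      atTop (𝓝 0) := by
    have hc : Continuous (fun w : ℝ => -(2*(w^3 + w^2 + w^3))) := by continuity
    have h2 := (hc.tendsto 0).comp t0
    have h3 : Tendsto (fun N : ℕ => -(2*((1/(y+(N:ℝ)))^3 + (1/(y+N))^2 + (1/(y+N))^3)))
        atTop (𝓝 (-(2*((0:ℝ)^3 + 0^2 + 0^3)))) := h2
    simpa using h3
  exact le_of_tendsto tb (Eventually.of_forall (fun N => le_trans (lower N) (step N)))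

lemma u_pos {y : ℝ} (hy : 0 < y) : 2*R0 y < (P0 y)^2 := by
  have h1 := u_step hy
  have h2 := u_nonneg (by linarith : (0:ℝ) < y + 1)
  linarith

noncomputable def Dser (x : ℝ) : ℝ := ∑' n : ℕ, (1/((n:ℝ)+1) - 1/((n:ℝ)+1+x))

lemma Dser_zero : Dser 0 = 0 := by
  rw [Dser]
  have : ∀ n : ℕ, (1/((n:ℝ)+1) - 1/((n:ℝ)+1+0)) = 0 := by intro n; norm_num
  simp [this]

lemma summable_D {x : ℝ} (hx : (-1:ℝ) < x) :
    Summable (fun n : ℕ => 1/((n:ℝ)+1) - 1/((n:ℝ)+1+x)) := by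
  set m : ℝ := min 1 (1+x) with hm
  have hm0 : 0 < m := lt_min one_pos (by linarith)
  refine summable_of_le_inv_sq hm0 (C := |x|) fun n => ?_
  have h1 : (0:ℝ) < (n:ℝ)+1 := by positivity
  have h2 : (0:ℝ) < (n:ℝ)+1+x := by
    have : m ≤ 1+x := min_le_right _ _
    have : (0:ℝ) ≤ (n:ℝ) := Nat.cast_nonneg n
    linarith [lt_min one_pos (by linarith : (0:ℝ) < 1+x)]
  have e : 1/((n:ℝ)+1) - 1/((n:ℝ)+1+x) = x/(((n:ℝ)+1)*((n:ℝ)+1+x)) := by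
    field_simp
    ring
  rw [e, abs_div, abs_of_pos (show (0:ℝ) < ((n:ℝ)+1)*((n:ℝ)+1+x) by positivity),
    div_eq_mul_one_div]
  have h3 : (m+n)^2 ≤ ((n:ℝ)+1)*((n:ℝ)+1+x) := by
    have h4 : m ≤ 1 := min_le_left _ _
    have h5 : m ≤ 1+x := min_le_right _ _
    have h6 : m + n ≤ (n:ℝ)+1 := by linarith
    have h7 : m + n ≤ (n:ℝ)+1+x := by linarith
    have h8 : (0:ℝ) ≤ m + n := by positivity
    nlinarith
  exact mul_le_mul_of_nonneg_left (one_div_le_one_div_of_le (by positivity) h3) (abs_nonneg x)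

lemma hasDerivAt_D {x : ℝ} (hx : -(1/2:ℝ) < x) : HasDerivAt Dser (P0 (x+1)) x := by
  have key : HasDerivAt (fun z => ∑' n : ℕ, (1/((n:ℝ)+1) - 1/((n:ℝ)+1+z)))
      (∑' n : ℕ, 1/((n:ℝ)+1+x)^2) x := by
    apply hasDerivAt_tsum_of_isPreconnected
      (u := fun n : ℕ => 1/((1/2:ℝ)+n)^2)
      (summable_inv_sq (by norm_num)) (isOpen_Ioi (a := -(1/2:ℝ)))
      (isPreconnected_Ioi)
      (g' := fun n y => 1/((n:ℝ)+1+y)^2)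
      ?_ ?_ (y₀ := 0) (by norm_num) ?_ hx
    · intro n y hy
      have hy' : -(1/2:ℝ) < y := hy
      have hpos : (0:ℝ) < (n:ℝ)+1+y := by
        have : (0:ℝ) ≤ (n:ℝ) := Nat.cast_nonneg n
        linarith
      have h1 : HasDerivAt (fun w : ℝ => (n:ℝ)+1+w) 1 y := (hasDerivAt_id y).const_add _
      have h2 := h1.inv (ne_of_gt hpos)
      have h3 := h2.const_sub (1/((n:ℝ)+1))
      convert h3 using 1
      · funext w; simp [one_div]
      · field_simp
    · intro n y hy
      have hy' : -(1/2:ℝ) < y := hy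
      have hpos : (1/2:ℝ)+(n:ℝ) ≤ (n:ℝ)+1+y := by linarith
      have h0 : (0:ℝ) < (1/2:ℝ)+(n:ℝ) := by positivity
      have hp2 : (0:ℝ) < (n:ℝ)+1+y := by
        have := Nat.cast_nonneg (α := ℝ) n; linarith
      rw [Real.norm_eq_abs, abs_of_pos (div_pos one_pos (pow_pos hp2 2))]
      apply one_div_le_one_div_of_le (by positivity)
      exact pow_le_pow_left₀ h0.le hpos 2
    · refine (summable_zero).congr fun n => ?_
      norm_num
  have e : (∑' n : ℕ, 1/((n:ℝ)+1+x)^2) = P0 (x+1) := by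
    rw [P0]; apply tsum_congr; intro n; ring_nf
  rw [e] at key
  exact key

lemma log_factorial (N : ℕ) :
    Real.log (Nat.factorial N : ℝ) = ∑ n ∈ Finset.range N, Real.log ((n:ℝ)+1) := by
  induction N with
  | zero => simp
  | succ n ih =>
    rw [Finset.sum_range_succ, ← ih, Nat.factorial_succ]
    push_cast
    rw [Real.log_mul (by positivity) (by exact_mod_cast Nat.cast_ne_zero.mpr n.factorial_ne_zero)]
    ring

lemma harmonic_real (N : ℕ) :
    ((harmonic N : ℚ) : ℝ) = ∑ n ∈ Finset.range N, 1/((n:ℝ)+1) := by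
  rw [harmonic]
  push_cast
  apply Finset.sum_congr rfl
  intro n _
  norm_num

lemma summable_Lterm {x : ℝ} (hx : 0 < x) :
    Summable (fun n : ℕ => x/((n:ℝ)+1) - Real.log (1+x/((n:ℝ)+1))) := by
  have key : ∀ n : ℕ, 0 ≤ x/((n:ℝ)+1) - Real.log (1+x/((n:ℝ)+1)) ∧
      x/((n:ℝ)+1) - Real.log (1+x/((n:ℝ)+1)) ≤ (x^2/2) * (1/(1+(n:ℝ))^2) := by
    intro n
    have h1 : (0:ℝ) < (n:ℝ)+1 := by positivity
    have hu : (0:ℝ) ≤ x/((n:ℝ)+1) := by positivity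
    constructor
    · have := Real.log_le_sub_one_of_pos (show (0:ℝ) < 1 + x/((n:ℝ)+1) by linarith)
      linarith
    · have := aux_log_ge hu
      have e : (x/((n:ℝ)+1))^2/2 = (x^2/2) * (1/(1+(n:ℝ))^2) := by
        rw [div_pow]; ring_nf
      nlinarith [this]
  apply Summable.of_nonneg_of_le (fun n => (key n).1) (fun n => (key n).2)
  exact (summable_inv_sq one_pos).mul_left _

noncomputable def Lser (x : ℝ) : ℝ :=
  -Real.eulerMascheroniConstant*x - Real.log x
    + ∑' n : ℕ, (x/((n:ℝ)+1) - Real.log (1+x/((n:ℝ)+1)))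

lemma L_eq {x : ℝ} (hx : 0 < x) : Lser x = Real.log (Real.Gamma x) := by
  set γ := Real.eulerMascheroniConstant
  -- partial sums of the series
  set f : ℕ → ℝ := fun n => x/((n:ℝ)+1) - Real.log (1+x/((n:ℝ)+1)) with hf
  have hsum := summable_Lterm hx
  have htend1 : Tendsto (fun N : ℕ => -γ*x - Real.log x + ∑ n ∈ Finset.range N, f n)
      atTop (𝓝 (Lser x)) := by
    rw [Lser]
    exact (hsum.hasSum.tendsto_sum_nat).const_add _
  -- identify partial sums with GammaSeq for N ≥ 1
  have key : ∀ N : ℕ, 1 ≤ N → -γ*x - Real.log x + ∑ n ∈ Finset.range N, f n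
      = Real.log (Real.GammaSeq x N) + x*(((harmonic N : ℚ):ℝ) - Real.log N - γ) := by
    intro N hN
    have hN0 : (0:ℝ) < N := by exact_mod_cast hN
    -- expand f
    have ef : ∀ n : ℕ, f n = x/((n:ℝ)+1) - (Real.log ((n:ℝ)+1+x) - Real.log ((n:ℝ)+1)) := by
      intro n
      have h1 : (0:ℝ) < (n:ℝ)+1 := by positivity
      show x/((n:ℝ)+1) - Real.log (1+x/((n:ℝ)+1)) = _
      have : (1:ℝ) + x/((n:ℝ)+1) = ((n:ℝ)+1+x)/((n:ℝ)+1) := by field_simp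
      rw [this, Real.log_div (by positivity) (ne_of_gt h1)]
    have esum : ∑ n ∈ Finset.range N, f n
        = x * ∑ n ∈ Finset.range N, 1/((n:ℝ)+1)
          - ∑ n ∈ Finset.range N, Real.log ((n:ℝ)+1+x)
          + ∑ n ∈ Finset.range N, Real.log ((n:ℝ)+1) := by
      rw [Finset.mul_sum]
      rw [← Finset.sum_sub_distrib, ← Finset.sum_add_distrib]
      apply Finset.sum_congr rfl
      intro n _
      rw [ef n]
      rw [mul_one_div]
      ring
    -- log of GammaSeq
    have hGS : Real.log (Real.GammaSeq x N)
        = x * Real.log N + Real.log (Nat.factorial N : ℝ) - ∑ m ∈ Finset.range (N+1), Real.log (x+m) := by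
      rw [Real.GammaSeq]
      have hprod : ∀ j ∈ Finset.range (N+1), x + (j:ℝ) ≠ 0 := by
        intro j _
        have : (0:ℝ) ≤ (j:ℝ) := Nat.cast_nonneg j
        positivity
      have hprodpos : (0:ℝ) < ∏ j ∈ Finset.range (N+1), (x + (j:ℝ)) := by
        apply Finset.prod_pos
        intro j _
        have : (0:ℝ) ≤ (j:ℝ) := Nat.cast_nonneg j
        positivity
      rw [Real.log_div (by positivity) (ne_of_gt hprodpos)]
      rw [Real.log_mul (by positivity) (by exact_mod_cast Nat.cast_ne_zero.mpr N.factorial_ne_zero)]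
      rw [Real.log_rpow hN0, Real.log_prod hprod]
    -- split off m = 0 term
    have hsplit : ∑ m ∈ Finset.range (N+1), Real.log (x+m)
        = Real.log x + ∑ n ∈ Finset.range N, Real.log ((n:ℝ)+1+x) := by
      rw [Finset.sum_range_succ' (fun m => Real.log (x+(m:ℝ))) N]
      push_cast
      have : Real.log (x + 0) = Real.log x := by norm_num
      rw [this]
      rw [add_comm]
      congr 1
      apply Finset.sum_congr rfl
      intro n _
      ring_nf
    rw [esum, hGS, hsplit, harmonic_real, log_factorial]
    ring
  -- RHS limit
  have htend2 : Tendsto (fun N : ℕ => Real.log (Real.GammaSeq x N)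
      + x*(((harmonic N : ℚ):ℝ) - Real.log N - γ)) atTop (𝓝 (Real.log (Real.Gamma x))) := by
    have h1 : Tendsto (fun N : ℕ => Real.log (Real.GammaSeq x N)) atTop
        (𝓝 (Real.log (Real.Gamma x))) :=
      (Real.GammaSeq_tendsto_Gamma x).log (ne_of_gt (Real.Gamma_pos_of_pos hx))
    have h2 : Tendsto (fun N : ℕ => ((harmonic N : ℚ):ℝ) - Real.log N - γ) atTop (𝓝 0) := by
      have := Real.tendsto_harmonic_sub_log
      have h3 := this.sub (tendsto_const_nhds (x := γ))
      simpa [γ] using h3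
    have h5 : Tendsto (fun N : ℕ => x * (((harmonic N : ℚ):ℝ) - Real.log N - γ)) atTop
        (𝓝 (x*0)) := h2.const_mul x
    have h4 := h1.add h5
    simpa using h4
  -- combine
  apply tendsto_nhds_unique (htend1.congr' ?_) htend2
  filter_upwards [eventually_ge_atTop 1] with N hN
  exact key N hN

lemma hasDerivAt_L {x : ℝ} (hx : 0 < x) :
    HasDerivAt Lser (-Real.eulerMascheroniConstant - 1/x + Dser x) x := by
  set g : ℕ → ℝ → ℝ := fun n z => z/((n:ℝ)+1) - Real.log (1+z/((n:ℝ)+1)) with hg_def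
  set g' : ℕ → ℝ → ℝ := fun n y => 1/((n:ℝ)+1) - 1/((n:ℝ)+1+y) with hg'_def
  have hg : ∀ (n : ℕ) (y : ℝ), y ∈ Ioo (0:ℝ) (x+1) → HasDerivAt (g n) (g' n y) y := by
    intro n y hy
    obtain ⟨hy0, hy1⟩ := hy
    have h1 : (0:ℝ) < (n:ℝ)+1 := by positivity
    have h2 : (0:ℝ) < (n:ℝ)+1+y := by linarith
    have hd1 : HasDerivAt (fun w : ℝ => w/((n:ℝ)+1)) (1/((n:ℝ)+1)) y := by
      simpa using (hasDerivAt_id y).div_const ((n:ℝ)+1)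
    have hd2 : HasDerivAt (fun w : ℝ => 1 + w/((n:ℝ)+1)) (1/((n:ℝ)+1)) y := hd1.const_add 1
    have hpos : (0:ℝ) < 1 + y/((n:ℝ)+1) := by positivity
    have hd3 := hd2.log (ne_of_gt hpos)
    have e : 1/((n:ℝ)+1) / (1 + y/((n:ℝ)+1)) = 1/((n:ℝ)+1+y) := by
      field_simp
    rw [e] at hd3
    exact hd1.sub hd3
  have hg' : ∀ (n : ℕ) (y : ℝ), y ∈ Ioo (0:ℝ) (x+1) →
      ‖g' n y‖ ≤ (x+1) * (1/((1:ℝ)+n)^2) := by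
    intro n y hy
    obtain ⟨hy0, hy1⟩ := hy
    have h1 : (0:ℝ) < (n:ℝ)+1 := by positivity
    have h2 : (0:ℝ) < (n:ℝ)+1+y := by linarith
    have e : g' n y = y/(((n:ℝ)+1)*((n:ℝ)+1+y)) := by
      rw [hg'_def]; field_simp; ring
    rw [Real.norm_eq_abs, e, abs_of_pos (by positivity)]
    rw [div_le_iff₀ (by positivity)]
    have e2 : (x+1) * (1/((1:ℝ)+n)^2) * (((n:ℝ)+1)*((n:ℝ)+1+y))
        = (x+1) * (((n:ℝ)+1+y)/((n:ℝ)+1)) := by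
      field_simp; ring
    rw [e2]
    have h3 : (1:ℝ) ≤ ((n:ℝ)+1+y)/((n:ℝ)+1) := by
      rw [le_div_iff₀ h1]; linarith
    nlinarith
  have key : HasDerivAt (fun z => ∑' n : ℕ, g n z) (∑' n : ℕ, g' n x) x :=
    hasDerivAt_tsum_of_isPreconnected ((summable_inv_sq one_pos).mul_left (x+1))
      (isOpen_Ioo (a := (0:ℝ)) (b := x+1)) ((convex_Ioo _ _).isPreconnected)
      hg hg' (Set.mem_Ioo.mpr ⟨hx, by linarith⟩) (summable_Lterm hx)
      (Set.mem_Ioo.mpr ⟨hx, by linarith⟩)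
  have hlin : HasDerivAt (fun z : ℝ => -Real.eulerMascheroniConstant*z)
      (-Real.eulerMascheroniConstant) x := by
    simpa using (hasDerivAt_id x).const_mul (-Real.eulerMascheroniConstant)
  have hlog : HasDerivAt Real.log x⁻¹ x := Real.hasDerivAt_log (ne_of_gt hx)
  have := (hlin.sub hlog).add key
  refine this.congr_deriv ?_
  rw [Dser, one_div, hg'_def]

lemma key_identity {x t : ℝ} (hx : 0 < x) (ht : 0 < t) :
    HasSum (fun n : ℕ => Real.log (x+n+1+t) - Real.log (x+n+t) - 1/(x+n+1))
      (-Real.eulerMascheroniConstant + Dser x - Real.log (x+t)) := by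
  set γ := Real.eulerMascheroniConstant
  set e : ℕ → ℝ := fun n => Real.log (x+n+1+t) - Real.log (x+n+t) - 1/(x+n+1) with he_def
  have hpos : ∀ n : ℕ, (0:ℝ) < x+n+t ∧ (0:ℝ) < x+n+1 ∧ (0:ℝ) < x+n+1+t := by
    intro n
    have : (0:ℝ) ≤ (n:ℝ) := Nat.cast_nonneg n
    exact ⟨by linarith, by linarith, by linarith⟩
  -- each term as log(1+v) - 1/(x+n+1)
  have he : ∀ n : ℕ, e n = Real.log (1+1/(x+n+t)) - 1/(x+n+1) := by
    intro n
    obtain ⟨h1, h2, h3⟩ := hpos n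
    rw [he_def]
    have : (1:ℝ) + 1/(x+n+t) = (x+n+1+t)/(x+n+t) := by field_simp; ring
    rw [this, Real.log_div (by positivity) (ne_of_gt h1)]
  -- summability
  have hsummable : Summable e := by
    refine summable_of_le_inv_sq hx (C := 1/2 + |1-t| + 1) fun n => ?_
    obtain ⟨h1, h2, h3⟩ := hpos n
    set v : ℝ := 1/(x+n+t) with hv
    have hv0 : 0 < v := by positivity
    have b1 : |Real.log (1+v) - v| ≤ v^2/2 := by
      rw [abs_le]
      constructor
      · have := aux_log_ge hv0.le; linarith
      · have := Real.log_le_sub_one_of_pos (show (0:ℝ) < 1+v by linarith)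
        nlinarith
    have b2 : |v - 1/(x+n+1)| ≤ |1-t| * (1/(x+n)^2) := by
      have e2 : v - 1/(x+n+1) = (1-t)/((x+n+t)*(x+n+1)) := by
        rw [hv, div_sub_div _ _ (ne_of_gt h1) (ne_of_gt h2)]
        congr 1
        ring
      rw [e2, abs_div, abs_of_pos (mul_pos h1 h2), div_le_iff₀ (mul_pos h1 h2)]
      have h4 : (x+n)^2 ≤ (x+n+t)*(x+n+1) := by nlinarith [Nat.cast_nonneg (α := ℝ) n]
      have h5 : (0:ℝ) < (x+n)^2 := by positivity
      calc |1-t| = |1-t| * (1/(x+n)^2) * (x+n)^2 := by field_simp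
        _ ≤ |1-t| * (1/(x+n)^2) * ((x+n+t)*(x+n+1)) :=
            mul_le_mul_of_nonneg_left h4 (by positivity)
    have b3 : v^2/2 ≤ (1/2) * (1/(x+n)^2) := by
      rw [hv, div_pow, one_pow]
      rw [div_div]
      rw [div_le_iff₀ (by positivity)]
      have h4 : (x+n)^2 ≤ (x+n+t)^2 := by nlinarith [Nat.cast_nonneg (α := ℝ) n]
      calc (1:ℝ) = (1/2) * (1/(x+n)^2) * (2*(x+n)^2) := by field_simp
        _ ≤ 1/2 * (1/(x+n)^2) * ((x+n+t)^2*2) := by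
            apply mul_le_mul_of_nonneg_left (by nlinarith) (by positivity)
    have etot : e n = (Real.log (1+v) - v) + (v - 1/(x+n+1)) := by
      rw [he n]; ring
    rw [etot]
    have htri := abs_add_le (Real.log (1+v) - v) (v - 1/(x+n+1))
    have hnn : (0:ℝ) ≤ 1/(x+n)^2 := by positivity
    calc |Real.log (1+v) - v + (v - 1/(x+n+1))| ≤ |Real.log (1+v) - v| + |v - 1/(x+n+1)| := htri
      _ ≤ v^2/2 + |1-t| * (1/(x+n)^2) := by linarith
      _ ≤ (1/2) * (1/(x+n)^2) + |1-t| * (1/(x+n)^2) := by linarith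
      _ ≤ (1/2 + |1-t| + 1) * (1/(x+n)^2) := by nlinarith
  -- partial sums
  have hpartial : ∀ N : ℕ, ∑ n ∈ Finset.range N, e n
      = Real.log (x+N+t) - Real.log (x+t) - ∑ n ∈ Finset.range N, 1/(x+n+1) := by
    intro N
    have htel := Finset.sum_range_sub (f := fun i : ℕ => Real.log (x+(i:ℝ)+t)) N
    have : ∑ n ∈ Finset.range N, e n
        = ∑ n ∈ Finset.range N, (Real.log (x+((n:ℕ)+1:ℕ)+t) - Real.log (x+(n:ℝ)+t))
          - ∑ n ∈ Finset.range N, 1/(x+n+1) := by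
      rw [← Finset.sum_sub_distrib]
      apply Finset.sum_congr rfl
      intro n _
      rw [he_def]
      push_cast
      ring_nf
    rw [this, htel]
    norm_num
  -- limit of partial sums
  have htendsto : Tendsto (fun N : ℕ => ∑ n ∈ Finset.range N, e n) atTop
      (𝓝 (-γ + Dser x - Real.log (x+t))) := by
    have t1 : Tendsto (fun N : ℕ => Real.log (x+N+t) - Real.log N) atTop (𝓝 0) := by
      have ha : Tendsto (fun N : ℕ => 1 + (x+t)/(N:ℝ)) atTop (𝓝 1) := by
        have := Tendsto.div_atTop (tendsto_const_nhds (x := x+t)) tendsto_natCast_atTop_atTop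
        simpa using (this.const_add 1)
      have hb := ha.log one_ne_zero
      rw [Real.log_one] at hb
      apply hb.congr'
      filter_upwards [eventually_ge_atTop 1] with N hN
      have hN0 : (0:ℝ) < N := by exact_mod_cast hN
      rw [← Real.log_div (by positivity) (ne_of_gt hN0)]
      congr 1
      field_simp
      ring
    have t2 : Tendsto (fun N : ℕ => Real.log N - ((harmonic N : ℚ):ℝ)) atTop (𝓝 (-γ)) := by
      have := Real.tendsto_harmonic_sub_log
      have h2 := this.neg
      apply h2.congr
      intro N; ring
    have t3 : Tendsto (fun N : ℕ => ∑ n ∈ Finset.range N, (1/((n:ℝ)+1) - 1/((n:ℝ)+1+x)))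
        atTop (𝓝 (Dser x)) := (summable_D (by linarith)).hasSum.tendsto_sum_nat
    have tcomb := ((t1.add t2).add t3).sub (tendsto_const_nhds (x := Real.log (x+t)))
    have : (0:ℝ) + -γ + Dser x - Real.log (x+t) = -γ + Dser x - Real.log (x+t) := by ring
    rw [this] at tcomb
    apply tcomb.congr'
    filter_upwards [eventually_ge_atTop 1] with N hN
    rw [hpartial N]
    have hH : ((harmonic N : ℚ):ℝ) = ∑ n ∈ Finset.range N, 1/((n:ℝ)+1) := by
      rw [harmonic]; push_cast
      apply Finset.sum_congr rfl
      intro n _; norm_num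
    rw [hH, Finset.sum_sub_distrib]
    have hsum_eq : ∑ n ∈ Finset.range N, 1/((n:ℝ)+1+x) = ∑ n ∈ Finset.range N, 1/(x+n+1) := by
      apply Finset.sum_congr rfl; intro n _; ring_nf
    rw [hsum_eq]
    ring
  rw [hasSum_iff_tendsto_nat_of_summable_norm (by simpa using hsummable.abs)]
  exact htendsto

lemma left_aux {x : ℝ} (hx : 0 < x) :
    Real.log (x + 1/2) < -Real.eulerMascheroniConstant + Dser x := by
  have hk := key_identity hx (t := 1/2) one_half_pos
  have hterm : ∀ n : ℕ, 0 < Real.log (x+n+1+1/2) - Real.log (x+n+1/2) - 1/(x+n+1) := by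
    intro n
    have hn : (0:ℝ) ≤ (n:ℝ) := Nat.cast_nonneg n
    have hy : (1:ℝ)/2 < x+n+1 := by linarith
    have h := aux_midpoint hy
    have e : x+(n:ℝ)+1-1/2 = x+n+1/2 := by ring
    rw [e] at h
    linarith
  have h0 : 0 < ∑' n : ℕ, (Real.log (x+n+1+1/2) - Real.log (x+n+1/2) - 1/(x+n+1)) :=
    Summable.tsum_pos hk.summable (fun n => (hterm n).le) 0 (hterm 0)
  rw [hk.tsum_eq] at h0
  linarith

lemma upper_aux {x : ℝ} (hx : 0 < x) :
    -Real.eulerMascheroniConstant + Dser x - Real.log (x+1) ≤ 0 := by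
  have hk := key_identity hx (t := 1) one_pos
  refine hasSum_le (fun n => ?_) hk hasSum_zero
  have hn : (0:ℝ) ≤ (n:ℝ) := Nat.cast_nonneg n
  have h1 : (0:ℝ) < x+n+1 := by linarith
  have e : (1:ℝ) + 1/(x+n+1) = (x+n+1+1)/(x+n+1) := by field_simp
  have h2 : Real.log (x+n+1+1) - Real.log (x+n+1) = Real.log (1 + 1/(x+n+1)) := by
    rw [e, Real.log_div (by positivity) (ne_of_gt h1)]
  have h3 : Real.log (1 + 1/(x+n+1)) ≤ 1/(x+n+1) := by
    have := Real.log_le_sub_one_of_pos (show (0:ℝ) < 1 + 1/(x+n+1) by positivity)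
    linarith
  have e2 : x+(n:ℝ)+1+1 = x+n+1+1 := by ring
  linarith [h2, h3]

noncomputable def cst : ℝ := Real.exp (-Real.eulerMascheroniConstant)

lemma cst_pos : 0 < cst := Real.exp_pos _

noncomputable def F (x : ℝ) : ℝ :=
  -Real.eulerMascheroniConstant + Dser x - Real.log (x + cst)

lemma F_zero : F 0 = 0 := by
  rw [F, Dser_zero, zero_add, cst, Real.log_exp]; ring

lemma hasDerivAt_F {x : ℝ} (hx : 0 ≤ x) :
    HasDerivAt F (P0 (x+1) - 1/(x+cst)) x := by
  have h1 := hasDerivAt_D (by linarith : -(1/2:ℝ) < x)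
  have h2 : HasDerivAt (fun y : ℝ => Real.log (y + cst)) (1/(x+cst)) x := by
    have hd : HasDerivAt (fun y : ℝ => y + cst) 1 x := (hasDerivAt_id x).add_const cst
    have hpos : (0:ℝ) < x + cst := by have := cst_pos; linarith
    simpa using hd.log (ne_of_gt hpos)
  have h3 := (h1.const_add (-Real.eulerMascheroniConstant)).sub h2
  exact h3

-- derivative of z ↦ P0 (z+1)
lemma hasDerivAt_P0s {x : ℝ} (hx : 0 ≤ x) :
    HasDerivAt (fun z : ℝ => P0 (z+1)) (-(2*R0 (x+1))) x := by
  have hg : ∀ (n : ℕ) (y : ℝ), y ∈ Ioi (-(1/2):ℝ) →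
      HasDerivAt (fun z : ℝ => 1/((z+1)+(n:ℝ))^2) (-(2*(1/((y+1)+(n:ℝ))^3))) y := by
    intro n y hy
    have hy' : -(1/2:ℝ) < y := hy
    have hn : (0:ℝ) ≤ (n:ℝ) := Nat.cast_nonneg n
    have hpos : (0:ℝ) < (y+1)+(n:ℝ) := by linarith
    have hb : HasDerivAt (fun z : ℝ => (z+1)+(n:ℝ)) 1 y :=
      ((hasDerivAt_id y).add_const 1).add_const (n:ℝ)
    have hsq : HasDerivAt (fun z : ℝ => ((z+1)+(n:ℝ))^2) (2*((y+1)+(n:ℝ))) y := by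
      have := hb.pow 2
      simpa [Pi.pow_def] using this
    have hinv := hsq.inv (by positivity)
    have e : -(2*((y+1)+(n:ℝ))) / (((y+1)+(n:ℝ))^2)^2 = -(2*(1/((y+1)+(n:ℝ))^3)) := by
      field_simp
    rw [e] at hinv
    refine HasDerivAt.congr_of_eventuallyEq hinv ?_
    filter_upwards with z
    rw [one_div]
    rfl
  have hbound : ∀ (n : ℕ) (y : ℝ), y ∈ Ioi (-(1/2):ℝ) →
      ‖-(2*(1/((y+1)+(n:ℝ))^3))‖ ≤ 4 * (1/((1/2:ℝ)+n)^2) := by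
    intro n y hy
    have hy' : -(1/2:ℝ) < y := hy
    have hn : (0:ℝ) ≤ (n:ℝ) := Nat.cast_nonneg n
    have hpos : (0:ℝ) < (y+1)+(n:ℝ) := by linarith
    have hhalf : (0:ℝ) < (1/2:ℝ)+(n:ℝ) := by linarith
    rw [Real.norm_eq_abs, abs_neg, abs_of_pos (by positivity)]
    have h1 : ((1/2:ℝ)+(n:ℝ))^3 ≤ ((y+1)+(n:ℝ))^3 := by
      apply pow_le_pow_left₀ hhalf.le
      linarith
    have h2 : 1/((y+1)+(n:ℝ))^3 ≤ 1/((1/2:ℝ)+(n:ℝ))^3 :=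
      one_div_le_one_div_of_le (by positivity) h1
    have h3 : 1/((1/2:ℝ)+(n:ℝ))^3 ≤ 2 * (1/((1/2:ℝ)+(n:ℝ))^2) := by
      rw [pow_succ]
      rw [div_le_iff₀ (by positivity)]
      have e2 : 2 * (1/((1/2:ℝ)+(n:ℝ))^2) * (((1/2:ℝ)+(n:ℝ))^2 * ((1/2:ℝ)+(n:ℝ)))
          = 2 * ((1/2:ℝ)+(n:ℝ)) := by field_simp
      rw [e2]
      linarith
    linarith
  have key : HasDerivAt (fun z : ℝ => ∑' n : ℕ, 1/((z+1)+(n:ℝ))^2)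
      (∑' n : ℕ, -(2*(1/((x+1)+(n:ℝ))^3))) x :=
    hasDerivAt_tsum_of_isPreconnected ((summable_inv_sq (by norm_num : (0:ℝ) < 1/2)).mul_left 4)
      (isOpen_Ioi (a := -(1/2:ℝ))) (isPreconnected_Ioi)
      hg hbound (Set.mem_Ioi.mpr (by norm_num : -(1/2:ℝ) < 0))
      (by
        refine (summable_inv_sq one_pos).congr fun n => ?_
        norm_num)
      (Set.mem_Ioi.mpr (by linarith))
  have e1 : (∑' n : ℕ, -(2*(1/((x+1)+(n:ℝ))^3))) = -(2*R0 (x+1)) := by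
    rw [R0, ← tsum_mul_left, ← tsum_neg]
  rw [e1] at key
  exact key

lemma hasDerivAt_Q {x : ℝ} (hx : 0 ≤ x) :
    HasDerivAt (fun z : ℝ => 1/(P0 (z+1)) - (z + cst))
      (2*R0 (x+1)/(P0 (x+1))^2 - 1) x := by
  have hP := hasDerivAt_P0s hx
  have hP0 : (0:ℝ) < P0 (x+1) := P0_pos (by linarith)
  have hinv := hP.inv (ne_of_gt hP0)
  have e : -(-(2*R0 (x+1))) / (P0 (x+1))^2 = 2*R0 (x+1)/(P0 (x+1))^2 := by ring
  rw [e] at hinv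
  have hlin : HasDerivAt (fun z : ℝ => z + cst) 1 x := (hasDerivAt_id x).add_const cst
  have := hinv.sub hlin
  refine HasDerivAt.congr_of_eventuallyEq (by simpa using this) ?_
  filter_upwards with z
  rw [one_div]
  rfl

lemma Q_strictAnti : StrictAntiOn (fun z : ℝ => 1/(P0 (z+1)) - (z + cst)) (Ici 0) := by
  apply strictAntiOn_of_deriv_neg (convex_Ici 0)
  · intro y hy
    exact ((hasDerivAt_Q hy).continuousAt).continuousWithinAt
  · intro y hy
    rw [interior_Ici] at hy
    have hy' : (0:ℝ) < y := hy
    rw [(hasDerivAt_Q hy'.le).deriv]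
    have hP0 : (0:ℝ) < P0 (y+1) := P0_pos (by linarith)
    have hu := u_pos (show (0:ℝ) < y+1 by linarith)
    have h1 : 2*R0 (y+1)/(P0 (y+1))^2 < 1 := by
      rw [div_lt_one (by positivity)]
      exact hu
    linarith


lemma log_ratio_tendsto (a b : ℝ) :
    Tendsto (fun y : ℝ => Real.log (y+a) - Real.log (y+b)) atTop (𝓝 0) := by
  have hdiv : Tendsto (fun y : ℝ => (a-b)/(y+b)) atTop (𝓝 0) :=
    Tendsto.div_atTop tendsto_const_nhds (tendsto_atTop_add_const_right atTop b tendsto_id)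
  have h0 : Tendsto (fun y : ℝ => 1 + (a-b)/(y+b)) atTop (𝓝 1) := by
    simpa using hdiv.const_add 1
  have h1 := h0.log one_ne_zero
  rw [Real.log_one] at h1
  apply h1.congr'
  filter_upwards [eventually_ge_atTop (|a|+|b|+1)] with y hy
  have ha' : -|a| ≤ a := neg_abs_le a
  have hb' : -|b| ≤ b := neg_abs_le b
  have h2 : (0:ℝ) < y + a := by
    have := abs_nonneg b; linarith
  have h3 : (0:ℝ) < y + b := by
    have := abs_nonneg a; linarith
  rw [show (1 + (a-b)/(y+b)) = (y+a)/(y+b) by field_simp; ring,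
    Real.log_div (ne_of_gt h2) (ne_of_gt h3)]

lemma F_tendsto : Tendsto F atTop (𝓝 0) := by
  apply tendsto_of_tendsto_of_tendsto_of_le_of_le' (log_ratio_tendsto (1/2) cst)
    (log_ratio_tendsto 1 cst)
  · filter_upwards [eventually_gt_atTop 0] with y hy
    have := left_aux hy
    rw [F]
    linarith
  · filter_upwards [eventually_gt_atTop 0] with y hy
    have := upper_aux hy
    rw [F]
    linarith

lemma F_neg {x : ℝ} (hx : 0 < x) : F x < 0 := by
  set Q : ℝ → ℝ := fun z => 1/(P0 (z+1)) - (z + cst) with hQ_def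
  rcases le_or_gt 0 (Q x) with hQ | hQ
  · -- F strictly decreasing on [0,x]
    have hanti : StrictAntiOn F (Icc 0 x) := by
      apply strictAntiOn_of_deriv_neg (convex_Icc 0 x)
      · intro y hy
        exact ((hasDerivAt_F hy.1).continuousAt).continuousWithinAt
      · intro y hy
        rw [interior_Icc] at hy
        obtain ⟨hy0, hyx⟩ := hy
        rw [(hasDerivAt_F hy0.le).deriv]
        have hQy : Q x < Q y := Q_strictAnti (le_of_lt hy0) hx.le hyx
        have hQy' : 0 < Q y := lt_of_le_of_lt hQ hQy
        have hP0 : (0:ℝ) < P0 (y+1) := P0_pos (by linarith)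
        have hc : (0:ℝ) < y + cst := by have := cst_pos; linarith
        rw [hQ_def] at hQy'
        simp only at hQy'
        have h1 : (y + cst) * P0 (y+1) < 1 := by
          rw [← lt_div_iff₀ hP0]
          rw [div_eq_mul_one_div, one_mul] at hQy' ⊢
          linarith
        have h2 : P0 (y+1) < 1/(y+cst) := by
          rw [lt_div_iff₀ hc]
          nlinarith
        linarith
    have h := hanti (show (0:ℝ) ∈ Icc 0 x from ⟨le_refl 0, hx.le⟩)
      (show x ∈ Icc 0 x from ⟨hx.le, le_refl x⟩) hx
    rw [F_zero] at h
    exact h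
  · -- Q x < 0 : F strictly increasing on [x, ∞), tends to 0
    have hmono : StrictMonoOn F (Ici x) := by
      apply strictMonoOn_of_deriv_pos (convex_Ici x)
      · intro y hy
        have hy' : x ≤ y := hy
        exact ((hasDerivAt_F (by linarith)).continuousAt).continuousWithinAt
      · intro y hy
        rw [interior_Ici] at hy
        have hy' : x < y := hy
        rw [(hasDerivAt_F (by linarith)).deriv]
        have hQy : Q y < Q x := Q_strictAnti hx.le (by linarith : (0:ℝ) ≤ y) hy'
        have hQy' : Q y < 0 := lt_trans hQy hQ
        have hP0 : (0:ℝ) < P0 (y+1) := P0_pos (by linarith)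
        have hc : (0:ℝ) < y + cst := by have := cst_pos; linarith
        rw [hQ_def] at hQy'
        simp only at hQy'
        have h1 : 1 < (y + cst) * P0 (y+1) := by
          rw [← div_lt_iff₀ hP0]
          rw [div_eq_mul_one_div, one_mul] at hQy' ⊢
          linarith
        have h2 : 1/(y+cst) < P0 (y+1) := by
          rw [div_lt_iff₀ hc]
          nlinarith
        linarith
    have h1 : F x < F (x+1) :=
      hmono self_mem_Ici (show x+1 ∈ Ici x by simp) (by linarith)
    have h2 : F (x+1) ≤ 0 := by
      apply ge_of_tendsto F_tendsto
      filter_upwards [eventually_ge_atTop (x+2)] with y hy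
      exact (hmono (show x+1 ∈ Ici x by simp)
        (show y ∈ Ici x by simp only [mem_Ici]; linarith) (by linarith)).le
    linarith


end PsiAux

/-- The digamma (psi) function: the logarithmic derivative of the gamma function. -/
noncomputable def psi (x : ℝ) : ℝ := deriv (fun t : ℝ => Real.log (Real.Gamma t)) x

lemma psi_eq {x : ℝ} (hx : 0 < x) :
    psi x = -Real.eulerMascheroniConstant - 1/x + Dser x := by
  have hL := hasDerivAt_L hx
  have heq : (fun t : ℝ => Real.log (Real.Gamma t)) =ᶠ[𝓝 x] Lser := by
    filter_upwards [Ioi_mem_nhds hx] with t ht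
    exact (L_eq ht).symm
  exact ((hL.congr_of_eventuallyEq heq)).deriv


theorem psi_sharp_bounds (x : ℝ) (hx : 0 < x) :
    Real.log (x + 1/2) - 1/x < psi x ∧
      psi x < Real.log (x + Real.exp (-Real.eulerMascheroniConstant)) - 1/x := by
  constructor
  · rw [psi_eq hx]
    linarith [left_aux hx]
  · rw [psi_eq hx]
    have h := F_neg hx
    rw [F, cst] at h
    linarith
end

section
/- The function Q(x) = e^{ψ(x+1)} − x satisfies lim_{x→∞} Q(x) = 1/2. -/
open Real Filter Set

lemma logGamma_diff {x : ℝ} (hx : 0 < x) :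
    DifferentiableAt ℝ (fun t : ℝ => Real.log (Real.Gamma t)) x := by
  refine (Real.differentiableAt_Gamma fun m => ?_).log (Real.Gamma_ne_zero fun m => ?_) <;>
  · have : (0:ℝ) ≤ m := Nat.cast_nonneg m
    intro h; rw [h] at hx; linarith

lemma psi_rec {x : ℝ} (hx : 0 < x) : psi (x + 1) = psi x + 1 / x := by
  unfold psi
  rw [← deriv_comp_add_const, one_div, ← Real.deriv_log,
    ← deriv_add (logGamma_diff hx) (Real.differentiableAt_log hx.ne')]
  apply Filter.EventuallyEq.deriv_eq
  filter_upwards [eventually_gt_nhds hx] with t ht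
  rw [Real.Gamma_add_one ht.ne', Real.log_mul ht.ne' (Real.Gamma_pos_of_pos ht).ne', add_comm]
  rfl

lemma convexOn_lg : ConvexOn ℝ (Ioi 0) (fun t : ℝ => Real.log (Real.Gamma t)) := by
  simpa [Function.comp_def] using Real.convexOn_log_Gamma

lemma psi_lb {x : ℝ} (hx : 0 < x) : Real.log x ≤ psi (x + 1) := by
  refine (le_of_eq ?_).trans <| convexOn_lg.slope_le_deriv (mem_Ioi.mpr hx)
    (mem_Ioi.mpr (by linarith)) (by linarith) (logGamma_diff (by linarith))
  rw [slope_def_field, Real.Gamma_add_one hx.ne',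
    Real.log_mul hx.ne' (Real.Gamma_pos_of_pos hx).ne']
  field_simp
  ring

lemma psi_ub {x : ℝ} (hx : 0 < x) : psi (x + 1) ≤ Real.log (x + 1) := by
  have h1 : (0:ℝ) < x + 1 := by linarith
  refine (convexOn_lg.deriv_le_slope (mem_Ioi.mpr h1) (mem_Ioi.mpr (by linarith : (0:ℝ) < x + 2))
    (by linarith) (logGamma_diff h1)).trans (le_of_eq ?_)
  rw [slope_def_field, show x + 2 = (x + 1) + 1 by ring, Real.Gamma_add_one h1.ne',
    Real.log_mul h1.ne' (Real.Gamma_pos_of_pos h1).ne']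
  field_simp
  ring

lemma psi_sum {x : ℝ} (hx : 0 < x) (n : ℕ) :
    psi (x + n + 1) = psi (x + 1) + ∑ k ∈ Finset.range n, 1 / (x + k + 1) := by
  induction n with
  | zero => simp
  | succ n ih =>
    have h : x + (n + 1 : ℕ) + 1 = (x + n + 1) + 1 := by push_cast; ring
    rw [h, psi_rec (by positivity), ih, Finset.sum_range_succ]
    push_cast; ring

lemma hasDerivAt_log1p {t : ℝ} (ht : (0:ℝ) < 1 + t) :
    HasDerivAt (fun u : ℝ => Real.log (1 + u)) ((1 + t)⁻¹) t := by
  simpa using ((hasDerivAt_id t).const_add 1).log ht.ne'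

lemma log_quad_lb {u : ℝ} (hu : 0 ≤ u) : u - u^2/2 ≤ Real.log (1 + u) := by
  have hcont : ContinuousOn (fun u : ℝ => Real.log (1 + u) - (u - u^2/2)) (Ici 0) := by
    refine ContinuousOn.sub (ContinuousOn.log (by fun_prop) fun x hx => ?_) (by fun_prop)
    have : (0:ℝ) ≤ x := hx
    positivity
  have hder : ∀ t ∈ interior (Ici (0:ℝ)),
      HasDerivAt (fun u : ℝ => Real.log (1 + u) - (u - u^2/2)) (t^2/(1+t)) t := by
    intro t ht
    rw [interior_Ici] at ht
    have ht0 : (0:ℝ) < t := ht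
    have ht' : (0:ℝ) < 1 + t := by linarith
    have := (hasDerivAt_log1p ht').sub ((hasDerivAt_id t).sub ((hasDerivAt_pow 2 t).div_const 2))
    refine this.congr_deriv ?_
    field_simp; ring
  have key : MonotoneOn (fun u : ℝ => Real.log (1 + u) - (u - u^2/2)) (Ici 0) := by
    refine monotoneOn_of_deriv_nonneg (convex_Ici 0) hcont
      (fun t ht => (hder t ht).differentiableAt.differentiableWithinAt) (fun t ht => ?_)
    rw [(hder t ht).deriv]
    rw [interior_Ici] at ht
    have ht0 : (0:ℝ) < t := ht
    positivity
  have h := key self_mem_Ici (mem_Ici.mpr hu) hu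
  simp at h
  linarith

lemma log_cubic_ub {u : ℝ} (hu : 0 ≤ u) : Real.log (1 + u) ≤ u - u^2/2 + u^3/3 := by
  have hcont : ContinuousOn (fun u : ℝ => (u - u^2/2 + u^3/3) - Real.log (1 + u)) (Ici 0) := by
    refine ContinuousOn.sub (by fun_prop) (ContinuousOn.log (by fun_prop) fun x hx => ?_)
    have : (0:ℝ) ≤ x := hx
    positivity
  have hder : ∀ t ∈ interior (Ici (0:ℝ)),
      HasDerivAt (fun u : ℝ => (u - u^2/2 + u^3/3) - Real.log (1 + u)) (t^3/(1+t)) t := by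
    intro t ht
    rw [interior_Ici] at ht
    have ht0 : (0:ℝ) < t := ht
    have ht' : (0:ℝ) < 1 + t := by linarith
    have := (((hasDerivAt_id t).sub ((hasDerivAt_pow 2 t).div_const 2)).add
      ((hasDerivAt_pow 3 t).div_const 3)).sub (hasDerivAt_log1p ht')
    refine this.congr_deriv ?_
    field_simp; ring
  have key : MonotoneOn (fun u : ℝ => (u - u^2/2 + u^3/3) - Real.log (1 + u)) (Ici 0) := by
    refine monotoneOn_of_deriv_nonneg (convex_Ici 0) hcont
      (fun t ht => (hder t ht).differentiableAt.differentiableWithinAt) (fun t ht => ?_)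
    rw [(hder t ht).deriv]
    rw [interior_Ici] at ht
    have ht0 : (0:ℝ) < t := ht
    positivity
  have h := key self_mem_Ici (mem_Ici.mpr hu) hu
  simp at h
  linarith

lemma log_succ_sub {a : ℝ} (ha : 0 < a) :
    Real.log (a + 1) - Real.log a = Real.log (1 + 1/a) := by
  rw [← Real.log_div (by positivity) ha.ne']
  congr 1; field_simp

lemma dk_bound {a : ℝ} (ha : 1 ≤ a) :
    |(Real.log (a+1) - Real.log a - 1/(a+1)) - (1/(2*a) - 1/(2*(a+1)))| ≤ 1/(2*a^3) := by
  have ha0 : (0:ℝ) < a := by linarith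
  have hu : (0:ℝ) ≤ 1/a := by positivity
  have h1 := log_quad_lb hu
  have h2 := log_cubic_ub hu
  rw [log_succ_sub ha0]
  have key1 : 1/a - (1/a)^2/2 - 1/(a+1) - (1/(2*a) - 1/(2*(a+1))) = -(1/(2*a^2*(a+1))) := by
    field_simp; ring
  have key2 : 1/a - (1/a)^2/2 + (1/a)^3/3 - 1/(a+1) - (1/(2*a) - 1/(2*(a+1)))
      = -(1/(2*a^2*(a+1))) + 1/(3*a^3) := by
    field_simp; ring
  have hb1 : 1/(2*a^2*(a+1)) ≤ 1/(2*a^3) := by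
    rw [div_le_div_iff₀ (by positivity) (by positivity)]
    nlinarith
  have hb2 : 1/(3*a^3) ≤ 1/(2*a^3) := by
    rw [div_le_div_iff₀ (by positivity) (by positivity)]
    nlinarith
  have hpos : (0:ℝ) ≤ 1/(2*a^2*(a+1)) := by positivity
  rw [abs_le]
  constructor <;> nlinarith

lemma dk_bound' {x a : ℝ} (hx : 1 ≤ x) (ha : x ≤ a) :
    |(Real.log (a+1) - Real.log a - 1/(a+1)) - (1/(2*a) - 1/(2*(a+1)))|
      ≤ (x+1)/(2*x^2) * (1/a - 1/(a+1)) := by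
  have ha1 : (1:ℝ) ≤ a := le_trans hx ha
  have ha0 : (0:ℝ) < a := by linarith
  have hx0 : (0:ℝ) < x := by linarith
  refine (dk_bound ha1).trans ?_
  have h : 1/a - 1/(a+1) = 1/(a*(a+1)) := by field_simp; ring
  rw [h, div_mul_div_comm, div_le_div_iff₀ (by positivity) (by positivity)]
  nlinarith [sq_nonneg (a - x), mul_pos ha0 hx0, mul_le_mul_of_nonneg_left ha (le_of_lt (mul_pos ha0 hx0))]

lemma psi_est {x : ℝ} (hx : 1 ≤ x) :
    |psi (x + 1) - Real.log x - 1/(2*x)| ≤ 1/x^2 := by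
  have hx0 : (0:ℝ) < x := by linarith
  -- the error bound constant
  set C : ℝ := (x+1)/(2*x^3) with hC
  -- per-n two-sided bounds
  have key : ∀ n : ℕ, psi (x + 1) - Real.log x - 1/(2*x) ∈
      Icc (-(1/(2*(x+n))) - C) (1/(x+n) - 1/(2*(x+n)) + C) := by
    intro n
    have hxn : (0:ℝ) < x + n := by positivity
    -- telescoping sums
    have hlogsum : ∑ k ∈ Finset.range n, (Real.log (x+k+1) - Real.log (x+k))
        = Real.log (x+n) - Real.log x := by
      have := Finset.sum_range_sub (f := fun k : ℕ => Real.log (x + k)) n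
      simpa [Nat.cast_succ, add_assoc] using this
    have htel : ∑ k ∈ Finset.range n, (1/(2*(x+k)) - 1/(2*(x+k+1)))
        = 1/(2*x) - 1/(2*(x+n)) := by
      have := Finset.sum_range_sub' (f := fun k : ℕ => 1/(2*(x + k))) n
      simpa [Nat.cast_succ, add_assoc] using this
    have htel2 : ∑ k ∈ Finset.range n, (1/(x+k) - 1/(x+k+1)) = 1/x - 1/(x+n) := by
      have := Finset.sum_range_sub' (f := fun k : ℕ => 1/(x + k)) n
      simpa [Nat.cast_succ, add_assoc] using this
    -- error sum bound
    have herr : |∑ k ∈ Finset.range n,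
        ((Real.log (x+k+1) - Real.log (x+k) - 1/(x+k+1)) - (1/(2*(x+k)) - 1/(2*(x+k+1))))|
        ≤ C := by
      refine (Finset.abs_sum_le_sum_abs _ _).trans ?_
      have hstep : ∀ k ∈ Finset.range n,
          |(Real.log (x+k+1) - Real.log (x+k) - 1/(x+k+1)) - (1/(2*(x+k)) - 1/(2*(x+k+1)))|
          ≤ (x+1)/(2*x^2) * (1/(x+k) - 1/(x+k+1)) := by
        intro k _
        have hk : x ≤ x + k := by
          have : (0:ℝ) ≤ k := Nat.cast_nonneg k
          linarith
        simpa [add_assoc] using dk_bound' hx hk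
      refine (Finset.sum_le_sum hstep).trans ?_
      rw [← Finset.mul_sum, htel2, hC]
      have h1 : 1/x - 1/(x+n) ≤ 1/x := by
        have : (0:ℝ) ≤ 1/(x+n) := by positivity
        linarith
      have h2 : (0:ℝ) ≤ (x+1)/(2*x^2) := by positivity
      calc (x+1)/(2*x^2) * (1/x - 1/(x+n)) ≤ (x+1)/(2*x^2) * (1/x) :=
            mul_le_mul_of_nonneg_left h1 h2
        _ = (x+1)/(2*x^3) := by rw [div_mul_div_comm, mul_one]; congr 1; ring
    -- the exact identity: psi(x+1) - log x = A_n + D_n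
    have hA_lb : Real.log (x+n) ≤ psi (x + n + 1) := by
      simpa [add_assoc] using psi_lb hxn
    have hA_ub : psi (x + n + 1) ≤ Real.log (x+n) + 1/(x+n) := by
      have h1 : psi (x + n + 1) ≤ Real.log (x + n + 1) := by
        simpa [add_assoc] using psi_ub hxn
      have h2 : Real.log (x + n + 1) - Real.log (x + n) ≤ 1/(x+n) := by
        rw [log_succ_sub hxn]
        have h3 : (0:ℝ) < 1 + 1/(x+n) := by positivity
        have := Real.log_le_sub_one_of_pos h3
        linarith
      linarith
    have hsum := psi_sum hx0 n
    -- D_n : split the sum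
    have hD : ∑ k ∈ Finset.range n,
        ((Real.log (x+k+1) - Real.log (x+k) - 1/(x+k+1)) - (1/(2*(x+k)) - 1/(2*(x+k+1))))
        = (Real.log (x+n) - Real.log x) - (∑ k ∈ Finset.range n, 1/(x+k+1))
          - (1/(2*x) - 1/(2*(x+n))) := by
      rw [← hlogsum, ← htel, ← Finset.sum_sub_distrib, ← Finset.sum_sub_distrib]
    rw [abs_le] at herr
    constructor <;> · nlinarith [herr.1, herr.2]
  -- take the limit n → ∞
  have hten : Tendsto (fun n : ℕ => 1/(x + n)) atTop (nhds 0) := by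
    simp only [one_div]
    exact (tendsto_atTop_add_const_left atTop x tendsto_natCast_atTop_atTop).inv_tendsto_atTop
  have hlow : -C ≤ psi (x + 1) - Real.log x - 1/(2*x) := by
    have hl : Tendsto (fun n : ℕ => -(1/(2*(x+n))) - C) atTop (nhds (-C)) := by
      have : Tendsto (fun n : ℕ => 1/(2*(x+n))) atTop (nhds 0) := by
        have := hten.const_mul (1/2 : ℝ)
        simpa [one_div, mul_comm, mul_inv] using this
      simpa using ((this.neg).sub_const C)
    exact le_of_tendsto hl (Eventually.of_forall fun n => (key n).1)
  have hhigh : psi (x + 1) - Real.log x - 1/(2*x) ≤ C := by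
    have hu : Tendsto (fun n : ℕ => 1/(x+n) - 1/(2*(x+n)) + C) atTop (nhds C) := by
      have h2 : Tendsto (fun n : ℕ => 1/(2*(x+n))) atTop (nhds 0) := by
        have := hten.const_mul (1/2 : ℝ)
        simpa [one_div, mul_comm, mul_inv] using this
      simpa using ((hten.sub h2).add_const C)
    exact ge_of_tendsto hu (Eventually.of_forall fun n => (key n).2)
  have hCle : C ≤ 1/x^2 := by
    rw [hC, div_le_div_iff₀ (by positivity) (by positivity)]
    nlinarith
  rw [abs_le]
  constructor <;> linarith

theorem Q_tendsto_atTop :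
    Tendsto (fun x : ℝ => Real.exp (psi (x + 1)) - x) atTop (nhds (1/2)) := by
  have h1 : Tendsto (fun x : ℝ => 1/x) atTop (nhds 0) := by
    simpa [one_div] using tendsto_inv_atTop_zero
  have h2 : Tendsto (fun x : ℝ => 1/x^2) atTop (nhds 0) := by
    have h := h1.mul h1
    rw [mul_zero] at h
    exact h.congr fun x => by rw [div_mul_div_comm, one_mul, ← pow_two]
  have h3 : Tendsto (fun x : ℝ => 1/(2*x)) atTop (nhds 0) := by
    have h := h1.const_mul (2⁻¹ : ℝ)
    rw [mul_zero] at h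
    exact h.congr fun x => by rw [one_div, one_div, ← mul_inv]
  have hlow : Tendsto (fun x : ℝ => 1/2 - 1/x) atTop (nhds (1/2)) := by
    simpa using (tendsto_const_nhds (x := (1/2:ℝ)) (f := atTop)).sub h1
  have hnum : Tendsto (fun x : ℝ => 1/2 + 1/x) atTop (nhds (1/2)) := by
    simpa using h1.const_add (1/2 : ℝ)
  have hden : Tendsto (fun x : ℝ => 1 - (1/(2*x) + 1/x^2)) atTop (nhds 1) := by
    simpa using (tendsto_const_nhds (x := (1:ℝ)) (f := atTop)).sub (h3.add h2)
  have hupp : Tendsto (fun x : ℝ => (1/2 + 1/x)/(1 - (1/(2*x) + 1/x^2))) atTop (nhds (1/2)) := by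
    have := hnum.div hden (by norm_num)
    rw [div_one] at this
    exact this
  refine tendsto_of_tendsto_of_tendsto_of_le_of_le' hlow hupp ?_ ?_ <;>
    filter_upwards [eventually_ge_atTop (2:ℝ)] with x hx2
  · -- lower bound
    have hx1 : (1:ℝ) ≤ x := by linarith
    have hx0 : (0:ℝ) < x := by linarith
    obtain ⟨v, hv⟩ : ∃ v : ℝ, v = psi (x + 1) - Real.log x := ⟨_, rfl⟩
    have hexp : Real.exp (psi (x + 1)) = x * Real.exp v := by
      rw [show psi (x + 1) = v + Real.log x by rw [hv]; ring, Real.exp_add,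
        Real.exp_log hx0]
      ring
    have habs := abs_le.mp (psi_est hx1)
    have hvl : 1/(2*x) - 1/x^2 ≤ v := by rw [hv]; linarith [habs.1]
    have hxl : x * (1/(2*x) - 1/x^2) = 1/2 - 1/x := by field_simp
    have f1 : x * (v + 1) ≤ x * Real.exp v :=
      mul_le_mul_of_nonneg_left (Real.add_one_le_exp v) hx0.le
    have f2 : x * (1/(2*x) - 1/x^2) ≤ x * v := mul_le_mul_of_nonneg_left hvl hx0.le
    rw [hexp]
    nlinarith
  · -- upper bound
    have hx1 : (1:ℝ) ≤ x := by linarith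
    have hx0 : (0:ℝ) < x := by linarith
    obtain ⟨v, hv⟩ : ∃ v : ℝ, v = psi (x + 1) - Real.log x := ⟨_, rfl⟩
    have hexp : Real.exp (psi (x + 1)) = x * Real.exp v := by
      rw [show psi (x + 1) = v + Real.log x by rw [hv]; ring, Real.exp_add,
        Real.exp_log hx0]
      ring
    have habs := abs_le.mp (psi_est hx1)
    obtain ⟨w, hw⟩ : ∃ w : ℝ, w = 1/(2*x) + 1/x^2 := ⟨_, rfl⟩
    have hvw : v ≤ w := by rw [hv, hw]; linarith [habs.2]
    have hw4 : w ≤ 1/2 := by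
      rw [hw]
      have ha : 1/(2*x) ≤ 1/4 := by
        rw [div_le_div_iff₀ (by positivity) (by norm_num)]; linarith
      have hb : 1/x^2 ≤ 1/4 := by
        rw [div_le_div_iff₀ (by positivity) (by norm_num)]; nlinarith
      linarith
    have hw0 : (0:ℝ) < 1 - w := by linarith
    have hev : Real.exp v * (1 - v) ≤ 1 := by
      have h := Real.add_one_le_exp (-v)
      have h2 : Real.exp v * (-v + 1) ≤ Real.exp v * Real.exp (-v) :=
        mul_le_mul_of_nonneg_left h (Real.exp_pos v).le
      rw [← Real.exp_add, add_neg_cancel, Real.exp_zero] at h2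
      nlinarith
    have hev2 : Real.exp v * (1 - w) ≤ 1 := by
      have : Real.exp v * (1 - w) ≤ Real.exp v * (1 - v) :=
        mul_le_mul_of_nonneg_left (by linarith) (Real.exp_pos v).le
      linarith
    have hxw : x * w = 1/2 + 1/x := by rw [hw]; field_simp
    rw [hexp, ← hw, le_div_iff₀ hw0]
    nlinarith [mul_le_mul_of_nonneg_left hev2 hx0.le]
end

section
/- The function Q(x) = e^{ψ(x+1)} − x is strictly decreasing on the interval (−1, ∞). -/
open Real Filter Set
open scoped Topology

namespace QAux

/-- The trigamma-type series. -/
noncomputable def P (x : ℝ) : ℝ := ∑' m : ℕ, 1/(x+m)^2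

lemma base_summable : Summable (fun m : ℕ => 1/((m:ℝ)+1)^2) := by
  have := Real.summable_one_div_nat_pow.mpr (le_refl 2)
  simpa using (summable_nat_add_iff 1).mpr this

lemma key_lb {x : ℝ} (hx : 0 < x) (m : ℕ) : min x 1 * ((m:ℝ)+1) ≤ x + m := by
  have h1 : (0:ℝ) ≤ m := Nat.cast_nonneg m
  have h2 : min x 1 ≤ x := min_le_left _ _
  have h3 : min x 1 ≤ 1 := min_le_right _ _
  nlinarith [lt_min hx one_pos]

lemma summable_P {x : ℝ} (hx : 0 < x) : Summable (fun m : ℕ => 1/(x+(m:ℝ))^2) := by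
  have hc : 0 < min x 1 := lt_min hx one_pos
  refine Summable.of_nonneg_of_le (fun m => by positivity)
    (fun m => ?_) (base_summable.mul_left ((min x 1)^2)⁻¹)
  have h1 : (0:ℝ) < x + m := by positivity
  have h2 := key_lb hx m
  have h4 : (0:ℝ) < (m:ℝ)+1 := by positivity
  have e : ((min x 1)^2)⁻¹ * (1/((m:ℝ)+1)^2) = 1/((min x 1)*((m:ℝ)+1))^2 := by
    rw [mul_pow]; field_simp
  rw [e]
  apply one_div_le_one_div_of_le (by positivity)
  exact pow_le_pow_left₀ (by positivity) h2 2

lemma summable_G {x : ℝ} (hx : 0 < x) :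
    Summable (fun m : ℕ => 1/((m:ℝ)+1) - 1/(x+(m:ℝ))) := by
  have hc : 0 < min x 1 := lt_min hx one_pos
  refine Summable.of_norm ?_
  refine Summable.of_nonneg_of_le (fun m => norm_nonneg _)
    (fun m => ?_) (base_summable.mul_left ((x+1)/(min x 1)))
  have h1 : (0:ℝ) < x + m := by positivity
  have h2 := key_lb hx m
  have h3 : (0:ℝ) < (m:ℝ)+1 := by positivity
  have e : 1/((m:ℝ)+1) - 1/(x+(m:ℝ)) = (x-1)/(((m:ℝ)+1)*(x+m)) := by
    field_simp; ring
  rw [e, Real.norm_eq_abs, abs_div, abs_of_pos (show (0:ℝ) < ((m:ℝ)+1)*(x+(m:ℝ)) by positivity)]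
  rw [div_le_iff₀ (by positivity)]
  have hab : |x - 1| ≤ x + 1 := by
    rw [abs_le]; constructor <;> nlinarith
  refine hab.trans ?_
  have e2 : (x+1)/(min x 1) * (1/((m:ℝ)+1)^2) * (((m:ℝ)+1)*(x+(m:ℝ)))
      = (x+1) * ((x+(m:ℝ))/((min x 1) * ((m:ℝ)+1))) := by
    field_simp
  rw [e2]
  nth_rewrite 1 [← mul_one (x+1)]
  apply mul_le_mul_of_nonneg_left _ (by linarith)
  rw [le_div_iff₀ (by positivity), one_mul]
  exact h2

/-- The limit function: digamma via series. -/
noncomputable def G (x : ℝ) : ℝ :=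
  -Real.eulerMascheroniConstant + ∑' m : ℕ, (1/((m:ℝ)+1) - 1/(x+(m:ℝ)))

lemma tendstoUniformlyOn_shift {F : ℕ → ℝ → ℝ} {g : ℝ → ℝ} {s : Set ℝ}
    (h : TendstoUniformlyOn F g atTop s) :
    TendstoUniformlyOn (fun n => F (n+1)) g atTop s := by
  rw [Metric.tendstoUniformlyOn_iff] at h ⊢
  intro ε hε
  exact (tendsto_add_atTop_nat 1).eventually (h ε hε)

lemma tendstoUniformlyOn_const_seq {c : ℕ → ℝ} {L : ℝ} {s : Set ℝ}
    (h : Tendsto c atTop (𝓝 L)) :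
    TendstoUniformlyOn (fun n (_ : ℝ) => c n) (fun _ => L) atTop s := by
  rw [Metric.tendstoUniformlyOn_iff]
  intro ε hε
  filter_upwards [h (Metric.ball_mem_nhds L hε)] with n hn t _
  rw [dist_comm]
  exact Metric.mem_ball.mp hn

lemma tendsto_c :
    Tendsto (fun n : ℕ => Real.log n - ∑ m ∈ Finset.range (n+1), 1/((m:ℝ)+1))
      atTop (𝓝 (-Real.eulerMascheroniConstant)) := by
  have h1 : Tendsto (fun n : ℕ => (harmonic (n+1) : ℝ) - Real.log (n+1)) atTop
      (𝓝 Real.eulerMascheroniConstant) := by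
    refine ((Real.tendsto_harmonic_sub_log).comp (tendsto_add_atTop_nat 1)).congr (fun n => ?_)
    simp only [Function.comp_apply]
    push_cast
    ring
  have h2 := Real.tendsto_log_nat_add_one_sub_log
  have h3 : Tendsto (fun n : ℕ => -((harmonic (n+1) : ℝ) - Real.log (n+1))
      - (Real.log (n+1) - Real.log n)) atTop (𝓝 (-Real.eulerMascheroniConstant - 0)) :=
    (h1.neg).sub h2
  rw [sub_zero] at h3
  refine h3.congr (fun n => ?_)
  have : ((harmonic (n+1) : ℚ) : ℝ) = ∑ m ∈ Finset.range (n+1), 1/((m:ℝ)+1) := by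
    rw [harmonic]
    push_cast
    refine Finset.sum_congr rfl (fun i _ => ?_)
    rw [one_div]
  rw [← this]
  ring

lemma unif_G {a b : ℝ} (ha : 0 < a) :
    TendstoUniformlyOn
      (fun (n : ℕ) (t : ℝ) => ∑ m ∈ Finset.range n, (1/((m:ℝ)+1) - 1/(t+(m:ℝ))))
      (fun t => ∑' m : ℕ, (1/((m:ℝ)+1) - 1/(t+(m:ℝ)))) atTop (Ioo a b) := by
  have hc : 0 < min a 1 := lt_min ha one_pos
  apply tendstoUniformlyOn_tsum_nat
    (u := fun m : ℕ => (b+1)/(min a 1) * (1/((m:ℝ)+1)^2))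
  · exact base_summable.mul_left _
  · intro m t ht
    obtain ⟨ht1, ht2⟩ := ht
    have h0 : 0 < t := lt_trans ha ht1
    have h1 : (0:ℝ) < t + m := by positivity
    have h3 : (0:ℝ) < (m:ℝ)+1 := by positivity
    have h2 : min a 1 * ((m:ℝ)+1) ≤ t + m := by
      have := key_lb ha m
      have hmin : min a 1 ≤ min t 1 := by
        apply le_min (le_trans (min_le_left _ _) ht1.le) (min_le_right _ _)
      nlinarith [key_lb h0 m]
    have e : 1/((m:ℝ)+1) - 1/(t+(m:ℝ)) = (t-1)/(((m:ℝ)+1)*(t+m)) := by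
      field_simp; ring
    rw [e, Real.norm_eq_abs, abs_div,
      abs_of_pos (show (0:ℝ) < ((m:ℝ)+1)*(t+(m:ℝ)) by positivity)]
    rw [div_le_iff₀ (by positivity)]
    have hab : |t - 1| ≤ b + 1 := by
      rw [abs_le]; constructor <;> nlinarith
    refine hab.trans ?_
    have e2 : (b+1)/(min a 1) * (1/((m:ℝ)+1)^2) * (((m:ℝ)+1)*(t+(m:ℝ)))
        = (b+1) * ((t+(m:ℝ))/((min a 1) * ((m:ℝ)+1))) := by
      field_simp
    rw [e2]
    nth_rewrite 1 [← mul_one (b+1)]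
    apply mul_le_mul_of_nonneg_left _ (by nlinarith)
    rw [le_div_iff₀ (by positivity), one_mul]
    exact h2

lemma hasDerivAt_logGamma {x : ℝ} (hx : 0 < x) :
    HasDerivAt (fun t : ℝ => Real.log (Real.Gamma t)) (G x) x := by
  have hab : x ∈ Ioo (x/2) (x+1) := ⟨by linarith, by linarith⟩
  have ha : 0 < x/2 := by linarith
  apply hasDerivAt_of_tendstoUniformlyOn (l := atTop) (f := fun (n : ℕ) (t : ℝ) =>
      Real.BohrMollerup.logGammaSeq t n)
    (f' := fun (n : ℕ) (t : ℝ) =>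
      (Real.log n - ∑ m ∈ Finset.range (n+1), 1/((m:ℝ)+1))
      + ∑ m ∈ Finset.range (n+1), (1/((m:ℝ)+1) - 1/(t+(m:ℝ))))
    isOpen_Ioo _ _ _ hab
  · exact ((tendstoUniformlyOn_const_seq tendsto_c).add
      (tendstoUniformlyOn_shift (unif_G ha)))
  · filter_upwards with n t ht
    have h0 : 0 < t := lt_trans ha ht.1
    have hd : HasDerivAt (fun t : ℝ => Real.BohrMollerup.logGammaSeq t n)
        (Real.log n - ∑ m ∈ Finset.range (n+1), 1/(t+(m:ℝ))) t := by
      unfold Real.BohrMollerup.logGammaSeq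
      apply HasDerivAt.sub
      · exact (hasDerivAt_mul_const (Real.log n)).add_const _
      · apply HasDerivAt.fun_sum
        intro m _
        have h1 : t + (m:ℝ) ≠ 0 := by positivity
        have := ((hasDerivAt_id t).add_const (m:ℝ)).log h1
        simpa using this
    refine hd.congr_deriv ?_
    rw [Finset.sum_sub_distrib]
    ring
  · intro t ht
    exact Real.BohrMollerup.tendsto_log_gamma (lt_trans ha ht.1)

lemma psi_eq_G {x : ℝ} (hx : 0 < x) : psi x = G x :=
  (hasDerivAt_logGamma hx).deriv

lemma unif_P {a b : ℝ} (ha : 0 < a) :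
    TendstoUniformlyOn
      (fun (n : ℕ) (t : ℝ) => ∑ m ∈ Finset.range n, 1/(t+(m:ℝ))^2)
      (fun t => ∑' m : ℕ, 1/(t+(m:ℝ))^2) atTop (Ioo a b) := by
  have hc : 0 < min a 1 := lt_min ha one_pos
  apply tendstoUniformlyOn_tsum_nat
    (u := fun m : ℕ => ((min a 1)^2)⁻¹ * (1/((m:ℝ)+1)^2))
  · exact base_summable.mul_left _
  · intro m t ht
    have h0 : 0 < t := lt_trans ha ht.1
    have h1 : (0:ℝ) < t + m := by positivity
    have h2 : min a 1 * ((m:ℝ)+1) ≤ t + m := by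
      nlinarith [key_lb h0 m, min_le_left a 1, min_le_right a 1, ht.1,
        Nat.cast_nonneg (α := ℝ) m, lt_min h0 one_pos]
    rw [Real.norm_eq_abs, abs_of_pos (by positivity)]
    have e : ((min a 1)^2)⁻¹ * (1/((m:ℝ)+1)^2) = 1/((min a 1)*((m:ℝ)+1))^2 := by
      rw [mul_pow]; field_simp
    rw [e]
    apply one_div_le_one_div_of_le (by positivity)
    exact pow_le_pow_left₀ (by positivity) h2 2

lemma hasDerivAt_G {x : ℝ} (hx : 0 < x) : HasDerivAt G (P x) x := by
  have hab : x ∈ Ioo (x/2) (x+1) := ⟨by linarith, by linarith⟩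
  have ha : 0 < x/2 := by linarith
  apply hasDerivAt_of_tendstoUniformlyOn (l := atTop) (f := fun (n : ℕ) (t : ℝ) =>
      -Real.eulerMascheroniConstant + ∑ m ∈ Finset.range n, (1/((m:ℝ)+1) - 1/(t+(m:ℝ))))
    (f' := fun (n : ℕ) (t : ℝ) => ∑ m ∈ Finset.range n, 1/(t+(m:ℝ))^2)
    isOpen_Ioo _ _ _ hab
  · exact unif_P ha
  · filter_upwards with n t ht
    have h0 : 0 < t := lt_trans ha ht.1
    apply HasDerivAt.const_add
    apply HasDerivAt.fun_sum
    intro m _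
    have h1 : t + (m:ℝ) ≠ 0 := by positivity
    have hinv : HasDerivAt (fun t : ℝ => (t+(m:ℝ))⁻¹) (-((t+(m:ℝ))^2)⁻¹) t := by
      have := ((hasDerivAt_id t).add_const (m:ℝ)).fun_inv h1
      simpa [neg_div, one_div] using this
    have := hinv.const_sub (1/((m:ℝ)+1))
    convert this using 1
    · funext u
      rw [one_div, one_div]
    · rw [one_div]; ring
  · intro t ht
    have h0 : 0 < t := lt_trans ha ht.1
    exact ((summable_G h0).hasSum.tendsto_sum_nat).const_add _

lemma hasDerivAt_psi {x : ℝ} (hx : 0 < x) : HasDerivAt psi (P x) x := by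
  have h : Set.EqOn psi G (Set.Ioi (0:ℝ)) := fun t ht => psi_eq_G ht
  exact (hasDerivAt_G hx).congr_of_eventuallyEq
    (Filter.eventuallyEq_of_mem (isOpen_Ioi.mem_nhds hx) h)

/-- The sequence whose limit is psi. -/
lemma tendsto_dSeq {x : ℝ} (hx : 0 < x) :
    Tendsto (fun n : ℕ => Real.log n - ∑ m ∈ Finset.range (n+1), 1/(x+(m:ℝ)))
      atTop (𝓝 (psi x)) := by
  rw [psi_eq_G hx]
  have h1 : Tendsto (fun n : ℕ => ∑ m ∈ Finset.range (n+1), (1/((m:ℝ)+1) - 1/(x+(m:ℝ))))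
      atTop (𝓝 (∑' m : ℕ, (1/((m:ℝ)+1) - 1/(x+(m:ℝ))))) :=
    ((summable_G hx).hasSum.tendsto_sum_nat).comp (tendsto_add_atTop_nat 1)
  have := tendsto_c.add h1
  refine this.congr (fun n => ?_)
  rw [Finset.sum_sub_distrib]
  ring

set_option maxHeartbeats 1000000 in
lemma log_ineq {a : ℝ} (ha : 1/2 < a) :
    Real.log (a + 1/2) - Real.log (a - 1/2) ≤ 1/a + 1/24 * (1/(a-1/2)^2 - 1/(a+1/2)^2) := by
  set g : ℝ → ℝ := fun b => 1/b + 1/24*(1/(b-1/2)^2 - 1/(b+1/2)^2)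
      - (Real.log (b+1/2) - Real.log (b-1/2)) with hgdef
  have hd : ∀ b ∈ Set.Ioi (1/2:ℝ), HasDerivAt g
      ((3 - 28*b^2)/(3*b^2*(2*b-1)^3*(2*b+1)^3)) b := by
    intro b hb
    rw [Set.mem_Ioi] at hb
    have h1 : (0:ℝ) < b - 1/2 := by linarith
    have h2 : (0:ℝ) < b := by linarith
    have h3 : (0:ℝ) < b + 1/2 := by linarith
    have h7 : (0:ℝ) < 2*b-1 := by linarith
    have h8 : (0:ℝ) < 2*b+1 := by linarith
    have hb1 : HasDerivAt (fun b:ℝ => 1/b) (-(b^2)⁻¹) b := by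
      simpa [one_div] using hasDerivAt_inv h2.ne'
    have hp1 : HasDerivAt (fun b:ℝ => (b-1/2)^2) (2*(b-1/2)) b := by
      have h := ((hasDerivAt_id b).sub_const (1/2:ℝ)).fun_pow 2
      norm_num at h
      convert h using 1
      all_goals ring
    have hp2 : HasDerivAt (fun b:ℝ => (b+1/2)^2) (2*(b+1/2)) b := by
      have h := ((hasDerivAt_id b).add_const (1/2:ℝ)).fun_pow 2
      norm_num at h
      convert h using 1
      all_goals ring
    have hb2 : HasDerivAt (fun b:ℝ => 1/(b-1/2)^2) (-(2*(b-1/2)) / ((b-1/2)^2)^2) b := by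
      simpa [one_div] using hp1.fun_inv (by positivity)
    have hb3 : HasDerivAt (fun b:ℝ => 1/(b+1/2)^2) (-(2*(b+1/2)) / ((b+1/2)^2)^2) b := by
      simpa [one_div] using hp2.fun_inv (by positivity)
    have hb4 : HasDerivAt (fun b:ℝ => Real.log (b+1/2)) (1/(b+1/2)) b := by
      have := ((hasDerivAt_id b).add_const (1/2:ℝ)).log (by positivity)
      simpa [one_div] using this
    have hb5 : HasDerivAt (fun b:ℝ => Real.log (b-1/2)) (1/(b-1/2)) b := by
      have := ((hasDerivAt_id b).sub_const (1/2:ℝ)).log (by positivity)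
      simpa [one_div] using this
    have hcomb := (hb1.add ((hb2.sub hb3).const_mul (1/24:ℝ))).sub (hb4.sub hb5)
    refine hcomb.congr_deriv ?_
    have h1' : b - 1/2 ≠ 0 := ne_of_gt h1
    have h2' : b ≠ 0 := ne_of_gt h2
    have h3' : b + 1/2 ≠ 0 := ne_of_gt h3
    have h7' : (2:ℝ)*b-1 ≠ 0 := ne_of_gt h7
    have h8' : (2:ℝ)*b+1 ≠ 0 := ne_of_gt h8
    have r1 : (1:ℝ)/(b-1/2) = 2/(2*b-1) := by
      rw [div_eq_div_iff h1' h7']; ring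
    have r2 : (1:ℝ)/(b+1/2) = 2/(2*b+1) := by
      rw [div_eq_div_iff h3' h8']; ring
    have r3 : -(2*(b-1/2)) / ((b-1/2)^2)^2 = -16/(2*b-1)^3 := by
      rw [div_eq_div_iff (by positivity) (by positivity)]; ring
    have r4 : -(2*(b+1/2)) / ((b+1/2)^2)^2 = -16/(2*b+1)^3 := by
      rw [div_eq_div_iff (by positivity) (by positivity)]; ring
    rw [r1, r2, r3, r4]
    have hb : b = ((2*b-1)+1)/2 := by ring
    have hd : 2*b+1 = (2*b-1)+2 := by ring
    rw [hd]
    generalize 2*b-1 = c at *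
    subst hb
    field_simp
    ring
  have hcont : ContinuousOn g (Set.Ioi (1/2:ℝ)) :=
    fun b hb => ((hd b hb).continuousAt).continuousWithinAt
  have hanti : AntitoneOn g (Set.Ioi (1/2:ℝ)) := by
    apply antitoneOn_of_deriv_nonpos (convex_Ioi _) hcont
    · rw [interior_Ioi]
      exact fun b hb => ((hd b hb).differentiableAt).differentiableWithinAt
    · rw [interior_Ioi]
      intro b hb
      rw [(hd b hb).deriv]
      have hb' : (1:ℝ)/2 < b := hb
      apply div_nonpos_of_nonpos_of_nonneg
      · nlinarith
      · have i1 : (0:ℝ) < 2*b-1 := by linarith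
        have i2 : (0:ℝ) < 2*b+1 := by linarith
        positivity
  have hsub : Tendsto (fun b:ℝ => b - 1/2) atTop atTop := by
    simpa [sub_eq_add_neg] using tendsto_atTop_add_const_right atTop (-(1/2):ℝ) tendsto_id
  have hlim : Tendsto g atTop (𝓝 0) := by
    have l1 : Tendsto (fun b:ℝ => 1/b) atTop (𝓝 0) := by
      simpa [one_div] using tendsto_inv_atTop_zero
    have hsq1 : Tendsto (fun b:ℝ => (b-1/2)^2) atTop atTop :=
      (tendsto_pow_atTop two_ne_zero).comp hsub
    have hadd : Tendsto (fun b:ℝ => b + 1/2) atTop atTop :=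
      tendsto_atTop_add_const_right atTop (1/2:ℝ) tendsto_id
    have hsq2 : Tendsto (fun b:ℝ => (b+1/2)^2) atTop atTop :=
      (tendsto_pow_atTop two_ne_zero).comp hadd
    have l2 : Tendsto (fun b:ℝ => 1/(b-1/2)^2) atTop (𝓝 0) := by
      simpa [one_div, Function.comp_def] using tendsto_inv_atTop_zero.comp hsq1
    have l2' : Tendsto (fun b:ℝ => 1/(b+1/2)^2) atTop (𝓝 0) := by
      simpa [one_div, Function.comp_def] using tendsto_inv_atTop_zero.comp hsq2
    have l3 : Tendsto (fun b:ℝ => Real.log (b+1/2) - Real.log (b-1/2)) atTop (𝓝 0) := by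
      have hinv : Tendsto (fun b:ℝ => 1/(b-1/2)) atTop (𝓝 0) := by
        simpa [one_div, Function.comp_def] using tendsto_inv_atTop_zero.comp hsub
      have h1 : Tendsto (fun b:ℝ => 1 + 1/(b-1/2)) atTop (𝓝 1) := by
        simpa using tendsto_const_nhds.add hinv
      have h2 := (Real.continuousAt_log (by norm_num : (1:ℝ) ≠ 0)).tendsto.comp h1
      rw [Real.log_one] at h2
      apply h2.congr'
      filter_upwards [eventually_gt_atTop (1/2:ℝ)] with b hb
      have hb1 : (0:ℝ) < b - 1/2 := by linarith
      have hb2 : (0:ℝ) < b + 1/2 := by linarith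
      show Real.log (1 + 1/(b-1/2)) = _
      rw [one_add_div hb1.ne', show b - 1/2 + 1 = b + 1/2 by ring]
      rw [Real.log_div hb2.ne' hb1.ne']
    have hv : (0:ℝ) + 1/24*((0:ℝ)-0) - 0 = 0 := by norm_num
    rw [← hv]
    exact (l1.add ((l2.sub l2').const_mul (1/24:ℝ))).sub l3
  have hev : ∀ᶠ b in atTop, g b ≤ g a := by
    filter_upwards [eventually_ge_atTop a] with b hb
    exact hanti (Set.mem_Ioi.mpr ha) (Set.mem_Ioi.mpr (by linarith)) hb
  have h0 : (0:ℝ) ≤ g a := le_of_tendsto hlim hev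
  rw [hgdef] at h0
  simp only at h0
  linarith

set_option maxHeartbeats 1000000 in
lemma psi_upper {x : ℝ} (hx : 1/2 < x) :
    psi x ≤ Real.log (x - 1/2) + 1/(24*(x-1/2)^2) := by
  have hx0 : 0 < x := by linarith
  have hs : 0 < x - 1/2 := by linarith
  refine le_of_tendsto (tendsto_dSeq hx0) ?_
  filter_upwards [eventually_ge_atTop 1] with n hn
  have hn1 : (1:ℝ) ≤ n := by exact_mod_cast hn
  have t1 := Finset.sum_range_sub (fun k : ℕ => Real.log (x + (k:ℝ) - 1/2)) (n+1)
  have t2 := Finset.sum_range_sub' (fun k : ℕ => 1/(x + (k:ℝ) - 1/2)^2) (n+1)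
  have tele1 : ∑ m ∈ Finset.range (n+1),
      (Real.log (x + (m:ℝ) + 1/2) - Real.log (x + (m:ℝ) - 1/2))
      = Real.log (x + (n:ℝ) + 1/2) - Real.log (x - 1/2) := by
    have e1 : ∑ m ∈ Finset.range (n+1),
        (Real.log (x + (m:ℝ) + 1/2) - Real.log (x + (m:ℝ) - 1/2))
        = ∑ m ∈ Finset.range (n+1),
          ((fun k : ℕ => Real.log (x + (k:ℝ) - 1/2)) (m+1)
            - (fun k : ℕ => Real.log (x + (k:ℝ) - 1/2)) m) := by
      refine Finset.sum_congr rfl (fun m _ => ?_)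
      have : x + ((m:ℝ)+1) - 1/2 = x + (m:ℝ) + 1/2 := by ring
      simp only [Nat.cast_add, Nat.cast_one, this]
    rw [e1, t1]
    have c1 : x + ((n+1 : ℕ):ℝ) - 1/2 = x + (n:ℝ) + 1/2 := by push_cast; ring
    have c2 : x + ((0 : ℕ):ℝ) - 1/2 = x - 1/2 := by push_cast; ring
    rw [c1, c2]
  have tele2 : ∑ m ∈ Finset.range (n+1),
      (1/(x+(m:ℝ)-1/2)^2 - 1/(x+(m:ℝ)+1/2)^2)
      = 1/(x-1/2)^2 - 1/(x+(n:ℝ)+1/2)^2 := by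
    have e2 : ∑ m ∈ Finset.range (n+1), (1/(x+(m:ℝ)-1/2)^2 - 1/(x+(m:ℝ)+1/2)^2)
        = ∑ m ∈ Finset.range (n+1),
          ((fun k : ℕ => 1/(x + (k:ℝ) - 1/2)^2) m
            - (fun k : ℕ => 1/(x + (k:ℝ) - 1/2)^2) (m+1)) := by
      refine Finset.sum_congr rfl (fun m _ => ?_)
      have : x + ((m:ℝ)+1) - 1/2 = x + (m:ℝ) + 1/2 := by ring
      simp only [Nat.cast_add, Nat.cast_one, this]
    rw [e2, t2]
    have c1 : x + ((n+1 : ℕ):ℝ) - 1/2 = x + (n:ℝ) + 1/2 := by push_cast; ring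
    have c2 : x + ((0 : ℕ):ℝ) - 1/2 = x - 1/2 := by push_cast; ring
    rw [c1, c2]
  have e : Real.log (x + (n:ℝ) + 1/2) - Real.log (x - 1/2)
        - 1/24 * (1/(x-1/2)^2 - 1/(x+(n:ℝ)+1/2)^2)
      = ∑ m ∈ Finset.range (n+1),
          ((Real.log (x + (m:ℝ) + 1/2) - Real.log (x + (m:ℝ) - 1/2))
           - 1/24 * (1/(x+(m:ℝ)-1/2)^2 - 1/(x+(m:ℝ)+1/2)^2)) := by
    rw [Finset.sum_sub_distrib, ← Finset.mul_sum, tele1, tele2]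
  have key : ∀ m : ℕ, (Real.log (x + (m:ℝ) + 1/2) - Real.log (x + (m:ℝ) - 1/2))
      - 1/24 * (1/(x+(m:ℝ)-1/2)^2 - 1/(x+(m:ℝ)+1/2)^2) ≤ 1/(x+(m:ℝ)) := by
    intro m
    have hm : (0:ℝ) ≤ m := Nat.cast_nonneg m
    have h : 1/2 < x + (m:ℝ) := by linarith
    have := log_ineq h
    linarith
  have hsum : Real.log (x + (n:ℝ) + 1/2) - Real.log (x - 1/2)
        - 1/24 * (1/(x-1/2)^2 - 1/(x+(n:ℝ)+1/2)^2)
      ≤ ∑ m ∈ Finset.range (n+1), 1/(x+(m:ℝ)) := by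
    rw [e]
    exact Finset.sum_le_sum (fun m _ => key m)
  have hlog : Real.log n ≤ Real.log (x + (n:ℝ) + 1/2) := by
    have h1 : (0:ℝ) < n := by linarith
    have h2 : (n:ℝ) ≤ x + n + 1/2 := by linarith
    exact Real.log_le_log h1 h2
  have hpos : (0:ℝ) ≤ 1/(x+(n:ℝ)+1/2)^2 := by positivity
  have heq : 1/(24*(x-1/2)^2) = 1/24 * (1/(x-1/2)^2) := by
    rw [one_div, mul_inv, ← one_div, ← one_div]
  linarith

lemma frac_ineq {a : ℝ} (ha : 1/2 < a) :
    1/a^2 ≤ (1/(a-1/2) - 1/(a+1/2)) - 1/12 * (1/a^3 - 1/(a+1)^3) := by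
  have h1 : 0 < a - 1/2 := by linarith
  have h2 : 0 < a := by linarith
  have h3 : 0 < a + 1/2 := by linarith
  have h4 : 0 < a + 1 := by linarith
  rw [← sub_nonneg]
  have h1' : a - 1/2 ≠ 0 := ne_of_gt h1
  have h2' : a ≠ 0 := ne_of_gt h2
  have h3' : a + 1/2 ≠ 0 := ne_of_gt h3
  have h4' : a + 1 ≠ 0 := ne_of_gt h4
  have h5' : (-1 : ℝ) + a * 2 ≠ 0 := by intro h; apply h1'; linarith
  have h6' : (1 : ℝ) + a * 2 ≠ 0 := by intro h; apply h3'; linarith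
  have h7' : (2 : ℝ) * a - 1 ≠ 0 := by intro h; apply h1'; linarith
  have h8' : (2 : ℝ) * a + 1 ≠ 0 := by intro h; apply h3'; linarith
  have r1 : 1/(a-1/2) = 2/(2*a-1) := by
    rw [div_eq_div_iff h1' h7']; ring
  have r2 : 1/(a+1/2) = 2/(2*a+1) := by
    rw [div_eq_div_iff h3' h8']; ring
  have e : (1/(a-1/2) - 1/(a+1/2)) - 1/12 * (1/a^3 - 1/(a+1)^3) - 1/a^2
      = (24*a^3 + 35*a^2 + 15*a + 1)
        / (12*a^3*(a+1)^3*(2*a-1)*(2*a+1)) := by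
    rw [r1, r2]
    field_simp
    ring
  rw [e]
  have hnum : (0:ℝ) < 24*a^3 + 35*a^2 + 15*a + 1 := by positivity
  have hden : (0:ℝ) < 12*a^3*(a+1)^3*(2*a-1)*(2*a+1) := by
    have : (0:ℝ) < 2*a-1 := by linarith
    have : (0:ℝ) < 2*a+1 := by linarith
    positivity
  positivity

set_option maxHeartbeats 1000000 in
lemma P_upper {x : ℝ} (hx : 1/2 < x) : P x ≤ 1/(x-1/2) - 1/(12*x^3) := by
  have hx0 : 0 < x := by linarith
  have hs : 0 < x - 1/2 := by linarith
  rw [P]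
  apply tsum_le_of_sum_range_le (f := fun m : ℕ => 1/(x+(m:ℝ))^2) (fun m => by positivity)
  intro n
  have key : ∀ m : ℕ, 1/(x+(m:ℝ))^2 ≤
      (1/(x+(m:ℝ)-1/2) - 1/(x+(m:ℝ)+1/2)) - 1/12 * (1/(x+(m:ℝ))^3 - 1/(x+(m:ℝ)+1)^3) := by
    intro m
    have hm : (0:ℝ) ≤ m := Nat.cast_nonneg m
    exact frac_ineq (by linarith)
  have step1 : ∑ m ∈ Finset.range n, 1/(x+(m:ℝ))^2
      ≤ ∑ m ∈ Finset.range n, ((1/(x+(m:ℝ)-1/2) - 1/(x+(m:ℝ)+1/2))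
        - 1/12 * (1/(x+(m:ℝ))^3 - 1/(x+(m:ℝ)+1)^3)) :=
    Finset.sum_le_sum (fun m _ => key m)
  have t1 := Finset.sum_range_sub' (fun k : ℕ => 1/(x + (k:ℝ) - 1/2)) n
  have t2 := Finset.sum_range_sub' (fun k : ℕ => 1/(x + (k:ℝ))^3) n
  have tele1 : ∑ m ∈ Finset.range n, (1/(x+(m:ℝ)-1/2) - 1/(x+(m:ℝ)+1/2))
      = 1/(x-1/2) - 1/(x+(n:ℝ)-1/2) := by
    have e1 : ∑ m ∈ Finset.range n, (1/(x+(m:ℝ)-1/2) - 1/(x+(m:ℝ)+1/2))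
        = ∑ m ∈ Finset.range n,
          ((fun k : ℕ => 1/(x + (k:ℝ) - 1/2)) m - (fun k : ℕ => 1/(x + (k:ℝ) - 1/2)) (m+1)) := by
      refine Finset.sum_congr rfl (fun m _ => ?_)
      have : x + ((m:ℝ)+1) - 1/2 = x + (m:ℝ) + 1/2 := by ring
      simp only [Nat.cast_add, Nat.cast_one, this]
    rw [e1, t1]
    have c2 : x + ((0 : ℕ):ℝ) - 1/2 = x - 1/2 := by push_cast; ring
    rw [c2]
  have tele2 : ∑ m ∈ Finset.range n, (1/(x+(m:ℝ))^3 - 1/(x+(m:ℝ)+1)^3)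
      = 1/x^3 - 1/(x+(n:ℝ))^3 := by
    have e2 : ∑ m ∈ Finset.range n, (1/(x+(m:ℝ))^3 - 1/(x+(m:ℝ)+1)^3)
        = ∑ m ∈ Finset.range n,
          ((fun k : ℕ => 1/(x + (k:ℝ))^3) m - (fun k : ℕ => 1/(x + (k:ℝ))^3) (m+1)) := by
      refine Finset.sum_congr rfl (fun m _ => ?_)
      have : x + ((m:ℝ)+1) = x + (m:ℝ) + 1 := by ring
      simp only [Nat.cast_add, Nat.cast_one, this]
    rw [e2, t2]
    have c2 : x + ((0 : ℕ):ℝ) = x := by push_cast; ring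
    rw [c2]
  have step2 : ∑ m ∈ Finset.range n, ((1/(x+(m:ℝ)-1/2) - 1/(x+(m:ℝ)+1/2))
        - 1/12 * (1/(x+(m:ℝ))^3 - 1/(x+(m:ℝ)+1)^3))
      = (1/(x-1/2) - 1/(x+(n:ℝ)-1/2)) - 1/12 * (1/x^3 - 1/(x+(n:ℝ))^3) := by
    rw [Finset.sum_sub_distrib, ← Finset.mul_sum, tele1, tele2]
  have step3 : (1/(x-1/2) - 1/(x+(n:ℝ)-1/2)) - 1/12 * (1/x^3 - 1/(x+(n:ℝ))^3)
      ≤ 1/(x-1/2) - 1/(12*x^3) := by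
    have hn : (0:ℝ) ≤ n := Nat.cast_nonneg n
    have hc1 : 0 < x + (n:ℝ) - 1/2 := by linarith
    have hc2 : 0 < x + (n:ℝ) := by linarith
    have hcube : x + (n:ℝ) - 1/2 ≤ 12*(x+(n:ℝ))^3 := by
      nlinarith [sq_nonneg (x+(n:ℝ)), mul_pos hc2 hc2]
    have h5 : 1/(12*(x+(n:ℝ))^3) ≤ 1/(x+(n:ℝ)-1/2) :=
      one_div_le_one_div_of_le hc1 hcube
    have he : 1/12 * (1/(x+(n:ℝ))^3) = 1/(12*(x+(n:ℝ))^3) := by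
      rw [eq_comm, one_div (12*(x+(n:ℝ))^3), mul_inv, ← one_div, ← one_div]
    have he2 : 1/12 * (1/x^3) = 1/(12*x^3) := by
      rw [eq_comm, one_div (12*x^3), mul_inv, ← one_div, ← one_div]
    nlinarith [h5]
  linarith

lemma P_pos {x : ℝ} (hx : 0 < x) : 0 < P x := by
  have h0 : (0:ℝ) < 1/(x+(0:ℕ):ℝ)^2 := by
    simp only [Nat.cast_zero, add_zero]
    positivity
  refine lt_of_lt_of_le h0 ?_
  exact (summable_P hx).le_tsum 0 (fun j _ => by positivity)

lemma P_rec {x : ℝ} (hx : 0 < x) : P x = 1/x^2 + P (x+1) := by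
  rw [P, P, (summable_P hx).tsum_eq_zero_add]
  congr 1
  · norm_num
  · refine tsum_congr (fun m => ?_)
    push_cast
    ring_nf

lemma psi_rec {x : ℝ} (hx : 0 < x) : psi (x+1) = psi x + 1/x := by
  have hder : ∀ {y : ℝ}, 0 < y → DifferentiableAt ℝ (fun t : ℝ => Real.log (Real.Gamma t)) y :=
    fun {y} hy => (hasDerivAt_logGamma hy).differentiableAt
  unfold psi
  rw [← deriv_comp_add_const (fun t => Real.log (Real.Gamma t)) 1, one_div, ← Real.deriv_log,
    ← deriv_add (hder hx) (Real.differentiableAt_log hx.ne')]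
  apply Filter.EventuallyEq.deriv_eq
  filter_upwards [eventually_gt_nhds hx] with y hy
  rw [Real.Gamma_add_one hy.ne', Real.log_mul hy.ne' (Real.Gamma_pos_of_pos hy).ne']
  rw [Pi.add_apply]
  ring

/-- The main inequality: `ψ'(x) e^(ψ(x)) < 1` for `x > 0`, base case `x ≥ 3`. -/
lemma main_base {x : ℝ} (hx : 3 ≤ x) : P x * Real.exp (psi x) < 1 := by
  have hx2 : 1/2 < x := by linarith
  have hx0 : 0 < x := by linarith
  have hs : 0 < x - 1/2 := by linarith
  have hP : 0 < P x := P_pos hx0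
  have hPu := P_upper hx2
  have hpsi := psi_upper hx2
  have hu : 0 < (x-1/2)/(12*x^3) := by positivity
  have hub : 1 - (x-1/2)/(12*x^3) > 0 := by
    rw [gt_iff_lt, sub_pos, div_lt_one (by positivity)]
    nlinarith [mul_pos hx0 (show (0:ℝ) < 12*x^2 - 1 by nlinarith)]
  have h12 : (12:ℝ)*x^3 ≠ 0 := by positivity
  have hform : 1/(x-1/2) - 1/(12*x^3) = (1 - (x-1/2)/(12*x^3))/(x-1/2) := by
    rw [eq_div_iff hs.ne', sub_mul, one_div_mul_cancel hs.ne', one_div (12*x^3),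
      inv_mul_eq_div]
  have hPu' : 0 < 1/(x-1/2) - 1/(12*x^3) := by
    rw [hform]; positivity
  have hlogP : Real.log (P x) ≤ Real.log (1/(x-1/2) - 1/(12*x^3)) :=
    Real.log_le_log hP hPu
  have hlog2 : Real.log (1/(x-1/2) - 1/(12*x^3))
      = Real.log (1 - (x-1/2)/(12*x^3)) - Real.log (x-1/2) := by
    rw [hform, Real.log_div (ne_of_gt hub) (ne_of_gt hs)]
  have hlog3 : Real.log (1 - (x-1/2)/(12*x^3)) ≤ -((x-1/2)/(12*x^3)) := by
    have := Real.log_le_sub_one_of_pos hub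
    linarith
  have hmargin : 1/(24*(x-1/2)^2) < (x-1/2)/(12*x^3) := by
    rw [div_lt_div_iff₀ (by positivity) (by positivity)]
    nlinarith [sq_nonneg x, sq_nonneg (x-3)]
  have hkey : Real.log (P x) + psi x < 0 := by
    have := hlogP
    rw [hlog2] at this
    linarith
  calc P x * Real.exp (psi x) = Real.exp (Real.log (P x) + psi x) := by
        rw [Real.exp_add, Real.exp_log hP]
    _ < Real.exp 0 := Real.exp_lt_exp.mpr hkey
    _ = 1 := Real.exp_zero

lemma exp_small {s : ℝ} (h0 : 0 ≤ s) (h1 : s ≤ 1/2) : Real.exp s ≤ 1 + 2*s := by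
  have h2 : 1 - s > 0 := by linarith
  have h3 : 1 - s ≤ Real.exp (-s) := by
    have := Real.add_one_le_exp (-s)
    linarith
  have h4 : Real.exp s * (1 - s) ≤ 1 := by
    calc Real.exp s * (1 - s) ≤ Real.exp s * Real.exp (-s) :=
          mul_le_mul_of_nonneg_left h3 (Real.exp_pos s).le
      _ = 1 := by rw [← Real.exp_add]; simp
  have h5 : Real.exp s ≤ 1/(1-s) := by
    rw [le_div_iff₀ h2]
    exact h4
  refine h5.trans ?_
  rw [div_le_iff₀ h2]
  nlinarith

lemma exp_lower {y : ℝ} (hy : 0 < y) :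
    y + 1/2 + 1/(6*y) + 1/(24*y^2) ≤ y^2 * (Real.exp (1/y) - 1) := by
  have ht : 0 < 1/y := by positivity
  have hsum := Real.sum_le_exp_of_nonneg ht.le 5
  have hexp : 1 + 1/y + (1/y)^2/2 + (1/y)^3/6 + (1/y)^4/24 ≤ Real.exp (1/y) := by
    refine le_trans (le_of_eq ?_) hsum
    rw [Finset.sum_range_succ, Finset.sum_range_succ, Finset.sum_range_succ,
      Finset.sum_range_succ, Finset.sum_range_succ, Finset.sum_range_zero]
    norm_num [Nat.factorial]
  have he : y^2 * ((1 + 1/y + (1/y)^2/2 + (1/y)^3/6 + (1/y)^4/24) - 1)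
      = y + 1/2 + 1/(6*y) + 1/(24*y^2) := by
    field_simp
    ring
  nlinarith [sq_nonneg y, hexp]

lemma main_step {y : ℝ} (hy : 0 < y) (h : P (y+1) * Real.exp (psi (y+1)) < 1) :
    P y * Real.exp (psi y) < 1 := by
  have hy1 : (0:ℝ) < y + 1 := by linarith
  have hy2 : (1:ℝ)/2 < y + 1 := by linarith
  have hrecP : P y = 1/y^2 + P (y+1) := P_rec hy
  have hrecPsi : psi (y+1) = psi y + 1/y := psi_rec hy
  -- upper bound on exp (psi (y+1))
  have hs0 : 0 < y + 1/2 := by linarith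
  have hsdef : (y+1) - 1/2 = y + 1/2 := by ring
  have hpsiu : psi (y+1) ≤ Real.log (y+1/2) + 1/(24*(y+1/2)^2) := by
    have := psi_upper hy2
    rw [hsdef] at this
    exact this
  set s : ℝ := 1/(24*(y+1/2)^2) with hsdef2
  have hs1 : 0 ≤ s := by positivity
  have hs2 : s ≤ 1/2 := by
    rw [hsdef2, div_le_iff₀ (by positivity)]
    nlinarith [sq_nonneg (y+1/2)]
  have hexp1 : Real.exp (psi (y+1)) ≤ (y+1/2) * (1 + 2*s) := by
    calc Real.exp (psi (y+1)) ≤ Real.exp (Real.log (y+1/2) + s) :=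
          Real.exp_le_exp.mpr hpsiu
      _ = (y+1/2) * Real.exp s := by rw [Real.exp_add, Real.exp_log hs0]
      _ ≤ (y+1/2) * (1 + 2*s) :=
          mul_le_mul_of_nonneg_left (exp_small hs1 hs2) hs0.le
  have hexp2 : (y+1/2) * (1 + 2*s) < y + 1/2 + 1/(6*y) := by
    have e : (y+1/2) * (1 + 2*s) = y + 1/2 + 1/(12*(y+1/2)) := by
      rw [hsdef2]
      field_simp
      ring
    rw [e]
    have : 1/(12*(y+1/2)) < 1/(6*y) := by
      apply one_div_lt_one_div_of_lt (by positivity)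
      linarith
    linarith
  have hE : Real.exp (psi (y+1)) < y^2 * (Real.exp (1/y) - 1) := by
    have h1 : (0:ℝ) ≤ 1/(24*y^2) := by positivity
    have := exp_lower hy
    linarith
  -- conclude
  have hA : 0 < Real.exp (psi (y+1)) := Real.exp_pos _
  have hgoal : (1/y^2 + P (y+1)) * Real.exp (psi (y+1)) < Real.exp (1/y) := by
    have h1 : Real.exp (psi (y+1)) / y^2 < Real.exp (1/y) - 1 := by
      rw [div_lt_iff₀ (by positivity)]
      calc Real.exp (psi (y+1)) < y^2 * (Real.exp (1/y) - 1) := hE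
        _ = (Real.exp (1/y) - 1) * y^2 := by ring
    have h2 : P (y+1) * Real.exp (psi (y+1)) < 1 := h
    have e : (1/y^2 + P (y+1)) * Real.exp (psi (y+1))
        = Real.exp (psi (y+1)) / y^2 + P (y+1) * Real.exp (psi (y+1)) := by
      field_simp
    rw [e]
    linarith
  have efinal : P y * Real.exp (psi y)
      = (1/y^2 + P (y+1)) * Real.exp (psi (y+1)) / Real.exp (1/y) := by
    rw [hrecP]
    have : psi y = psi (y+1) - 1/y := by linarith [hrecPsi]
    rw [this, Real.exp_sub]
    field_simp
  rw [efinal, div_lt_one (Real.exp_pos _)]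
  exact hgoal

lemma main_ineq {x : ℝ} (hx : 0 < x) : P x * Real.exp (psi x) < 1 := by
  have key : ∀ n : ℕ, ∀ y : ℝ, 0 < y → 3 ≤ y + n → P y * Real.exp (psi y) < 1 := by
    intro n
    induction n with
    | zero =>
      intro y hy h
      push_cast at h
      exact main_base (by linarith)
    | succ n ih =>
      intro y hy h
      push_cast at h
      rcases le_or_gt 3 (y + n) with h' | h'
      · exact ih y hy (by push_cast; linarith)
      · exact main_step hy (ih (y+1) (by linarith) (by push_cast; linarith))
  refine key 3 x hx ?_
  push_cast
  linarith

end QAux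

theorem Q_strictAntiOn :
    StrictAntiOn (fun x : ℝ => Real.exp (psi (x + 1)) - x) (Set.Ioi (-1)) := by
  have hderiv : ∀ x ∈ Set.Ioi (-1:ℝ), HasDerivAt (fun x : ℝ => Real.exp (psi (x+1)) - x)
      (Real.exp (psi (x+1)) * QAux.P (x+1) - 1) x := by
    intro x hx
    rw [Set.mem_Ioi] at hx
    have h1 : 0 < x + 1 := by linarith
    have h2 : HasDerivAt (fun y : ℝ => psi (y+1)) (QAux.P (x+1)) x :=
      HasDerivAt.comp_add_const x 1 (QAux.hasDerivAt_psi h1)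
    have h3 := h2.exp
    have h4 := h3.fun_sub (hasDerivAt_id x)
    simpa using h4
  apply strictAntiOn_of_deriv_neg (convex_Ioi _)
  · exact fun x hx => ((hderiv x hx).differentiableAt).continuousAt.continuousWithinAt
  · rw [interior_Ioi]
    intro x hx
    rw [(hderiv x hx).deriv]
    rw [Set.mem_Ioi] at hx
    have h1 : 0 < x + 1 := by linarith
    have := QAux.main_ineq h1
    rw [mul_comm] at this
    linarith
end

section
/- For every natural number n ≥ 1, ln(n + 1/2) + γ < H_n ≤ ln(n + e^{1−γ} − 1) + γ, where H_n = ∑_{k=1}^n 1/k is the n-th harmonic number. -/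
open Real Filter Set Topology

section Helpers

lemma exp_key {t : ℝ} (h0 : 0 < t) (h1 : t ≤ 1) : Real.exp t * (2 - t) < 2 + t := by
  have hb := Real.exp_bound' h0.le h1 (n := 4) (by norm_num)
  norm_num [Finset.sum_range_succ, Nat.factorial] at hb
  nlinarith [pow_pos h0 3, pow_pos h0 4]

lemma log_key {t : ℝ} (h0 : 0 < t) (h1 : t ≤ 1) : t < Real.log ((2+t)/(2-t)) := by
  have h2 : (0:ℝ) < 2 - t := by linarith
  rw [Real.lt_log_iff_exp_lt (by positivity), lt_div_iff₀ h2]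
  exact exp_key h0 h1

lemma log_step {x : ℝ} (hx : 0 ≤ x) : 1/(x+1) < Real.log (x + 3/2) - Real.log (x + 1/2) := by
  have hx1 : (0:ℝ) < x + 1 := by linarith
  have h0 : 0 < 1/(x+1) := by positivity
  have h1 : 1/(x+1) ≤ 1 := by rw [div_le_one hx1]; linarith
  have key := log_key h0 h1
  have h2 : (0:ℝ) < 2 - 1/(x+1) := by
    rw [sub_pos, div_lt_iff₀ hx1]; linarith
  have heq : (2 + 1/(x+1))/(2 - 1/(x+1)) = (x + 3/2)/(x + 1/2) := by
    rw [div_eq_div_iff h2.ne' (by linarith)]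
    field_simp
    ring
  rw [heq] at key
  rwa [Real.log_div (by positivity) (by positivity)] at key

lemma tendsto_log_diff (a b : ℝ) (ha : 0 < a) (hb : 0 < b) :
    Tendsto (fun n : ℕ => Real.log (n + a) - Real.log (n + b)) atTop (𝓝 0) := by
  suffices h : Tendsto (fun x : ℝ => Real.log (x + a) - Real.log (x + b)) atTop (𝓝 0) by
    exact h.comp tendsto_natCast_atTop_atTop
  have h1 : Tendsto (fun x : ℝ => (x + a) / (x + b)) atTop (𝓝 1) := by
    have h2 : Tendsto (fun x : ℝ => 1 + (a - b) / (x + b)) atTop (𝓝 1) := by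
      simpa using
        (tendsto_const_nhds.div_atTop (tendsto_atTop_add_const_right _ b tendsto_id)).const_add
          (1 : ℝ)
    apply h2.congr'
    filter_upwards [eventually_gt_atTop 0] with x hx
    have : x + b ≠ 0 := by positivity
    field_simp
    ring
  have h3 := (Real.continuousAt_log one_ne_zero).tendsto.comp h1
  rw [Real.log_one] at h3
  apply h3.congr'
  filter_upwards [eventually_gt_atTop 0] with x hx
  simp only [Function.comp_apply]
  rw [Real.log_div (by positivity) (by positivity)]

noncomputable def dSeq (n : ℕ) : ℝ := (harmonic n : ℝ) - Real.log (n + 1/2)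

lemma dSeq_strictAnti : StrictAnti dSeq := by
  refine strictAnti_nat_of_succ_lt (fun n => ?_)
  have hs := log_step (x := (n : ℝ)) (Nat.cast_nonneg n)
  have hh : (harmonic (n+1) : ℝ) = (harmonic n : ℝ) + 1/((n:ℝ)+1) := by
    rw [harmonic_succ]; push_cast; ring
  simp only [dSeq, hh]
  push_cast
  have : ((n:ℝ) + 1) + 1/2 = (n:ℝ) + 3/2 := by ring
  rw [this]
  linarith

lemma dSeq_tendsto : Tendsto dSeq atTop (𝓝 Real.eulerMascheroniConstant) := by
  have h1 := Real.tendsto_eulerMascheroniSeq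
  have h2 := tendsto_log_diff 1 (1/2) one_pos (by norm_num)
  have h3 := h1.add h2
  rw [add_zero] at h3
  apply h3.congr
  intro n
  simp only [Real.eulerMascheroniSeq, dSeq]
  ring

lemma gamma_lt_dSeq (n : ℕ) : Real.eulerMascheroniConstant < dSeq n := by
  have h1 := dSeq_strictAnti.antitone.le_of_tendsto dSeq_tendsto (n + 1)
  exact h1.trans_lt (dSeq_strictAnti (Nat.lt_succ_self n))

lemma harmonic16 : (harmonic 16 : ℝ) = 2436559/720720 := by
  have h : harmonic 16 = 2436559/720720 := by
    simp [harmonic, Finset.sum_range_succ]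
    norm_num
  rw [h]; norm_num

lemma log_165 : (2.8033579 : ℝ) ≤ Real.log (16 + 1/2) := by
  have h1 : (16 + 1/2 : ℝ) = 2^4 * (33/32) := by norm_num
  rw [h1, Real.log_mul (by norm_num) (by norm_num), Real.log_pow]
  have h2 : (2/65 : ℝ) < Real.log (33/32) := by
    have := log_key (t := 2/65) (by norm_num) (by norm_num)
    norm_num at this
    exact this
  have h3 := Real.log_two_gt_d9
  push_cast
  nlinarith

lemma gamma_ub : Real.eulerMascheroniConstant < 0.5774 := by
  have h := gamma_lt_dSeq 16
  simp only [dSeq] at h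
  rw [harmonic16] at h
  have := log_165
  push_cast at h
  nlinarith

lemma c_lb : (0.5253 : ℝ) ≤ Real.exp (1 - Real.eulerMascheroniConstant) - 1 := by
  have h1 : Real.exp 0.4226 ≤ Real.exp (1 - Real.eulerMascheroniConstant) := by
    apply Real.exp_le_exp.2
    have := gamma_ub
    norm_num at this ⊢
    linarith
  have h2 := Real.sum_le_exp_of_nonneg (x := 0.4226) (by norm_num) 6
  norm_num [Finset.sum_range_succ, Nat.factorial] at h2
  nlinarith

lemma poly_key {t : ℝ} (h0 : 0 < t) (h1 : t ≤ 1/4) :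
    t ≤ (1 - 0.4747*t) * (t + t^2/2 + t^3/6 + t^4/24) := by
  nlinarith [pow_pos h0 2, pow_pos h0 3, pow_pos h0 4, pow_pos h0 5, sq_nonneg t]

lemma log_ratio_le {x : ℝ} (hx : 3 ≤ x) :
    Real.log ((x + 1.5253)/(x + 0.5253)) ≤ 1/(x+1) := by
  have hx1 : (0:ℝ) < x + 1 := by linarith
  set t : ℝ := 1/(x+1) with htdef
  have h0 : 0 < t := by positivity
  have h1 : t ≤ 1/4 := by
    rw [htdef, div_le_div_iff₀ hx1 (by norm_num)]; linarith
  have ht : t * (x + 1) = 1 := by rw [htdef]; field_simp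
  have hp := poly_key h0 h1
  have hA : (0:ℝ) < (x + 1.5253)/(x + 0.5253) := by positivity
  rw [Real.log_le_iff_le_exp hA]
  have hexp := Real.sum_le_exp_of_nonneg h0.le 5
  have hs : ∑ i ∈ Finset.range 5, t ^ i / i.factorial
      = 1 + t + t^2/2 + t^3/6 + t^4/24 := by
    simp [Finset.sum_range_succ, Nat.factorial]
  rw [hs] at hexp
  refine le_trans ?_ hexp
  rw [div_le_iff₀ (by linarith)]
  nlinarith [hp, ht, h0.le]

noncomputable def cc : ℝ := Real.exp (1 - Real.eulerMascheroniConstant) - 1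

noncomputable def uSeq (n : ℕ) : ℝ := (harmonic n : ℝ) - Real.log (n + cc)

lemma cc_pos : (0:ℝ) < cc := lt_of_lt_of_le (by norm_num) c_lb

lemma uSeq_step {n : ℕ} (hn : 3 ≤ n) : uSeq n ≤ uSeq (n+1) := by
  have hn3 : (3:ℝ) ≤ (n:ℝ) := by exact_mod_cast hn
  have hcc : (0.5253:ℝ) ≤ cc := c_lb
  have h1 : Real.log ((n:ℝ)+1+cc) - Real.log ((n:ℝ)+cc)
      = Real.log (((n:ℝ)+1+cc)/((n:ℝ)+cc)) := by
    rw [Real.log_div (by positivity) (by positivity)]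
  have h2 : ((n:ℝ)+1+cc)/((n:ℝ)+cc) ≤ ((n:ℝ) + 1.5253)/((n:ℝ) + 0.5253) := by
    rw [div_le_div_iff₀ (by positivity) (by positivity)]
    nlinarith
  have h3 : Real.log (((n:ℝ)+1+cc)/((n:ℝ)+cc))
      ≤ Real.log (((n:ℝ) + 1.5253)/((n:ℝ) + 0.5253)) := by
    apply Real.log_le_log (by positivity) h2
  have h4 := log_ratio_le hn3
  have hh : (harmonic (n+1) : ℝ) = (harmonic n : ℝ) + 1/((n:ℝ)+1) := by
    rw [harmonic_succ]; push_cast; ring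
  simp only [uSeq, hh]
  push_cast
  have he : ((n:ℝ)+1) + cc = (n:ℝ)+1+cc := by ring
  rw [he]
  linarith

lemma uSeq_tendsto : Tendsto uSeq atTop (𝓝 Real.eulerMascheroniConstant) := by
  have h1 := Real.tendsto_eulerMascheroniSeq
  have h2 := tendsto_log_diff 1 cc one_pos cc_pos
  have h3 := h1.add h2
  rw [add_zero] at h3
  apply h3.congr
  intro n
  simp only [Real.eulerMascheroniSeq, uSeq]
  ring

lemma uSeq_le {n : ℕ} (hn : 3 ≤ n) : uSeq n ≤ Real.eulerMascheroniConstant := by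
  have mono : ∀ m, n ≤ m → uSeq n ≤ uSeq m := by
    intro m hm
    induction m, hm using Nat.le_induction with
    | base => exact le_refl _
    | succ m hm ih => exact ih.trans (uSeq_step (hn.trans hm))
  exact ge_of_tendsto uSeq_tendsto (eventually_atTop.2 ⟨n, mono⟩)

lemma harmonic63 : (47279/10000 : ℝ) ≤ (harmonic 63 : ℝ) := by
  have h : (47279/10000 : ℚ) ≤ harmonic 63 := by
    simp [harmonic, Finset.sum_range_succ]
    norm_num
  have h2 := (Rat.cast_le (K := ℝ)).mpr h
  push_cast at h2
  exact h2

lemma exp_half_ub : Real.exp (1/2 : ℝ) ≤ 1.6487213 := by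
  have h := Real.exp_one_lt_d9
  have hm : Real.exp (1/2 : ℝ) * Real.exp (1/2 : ℝ) = Real.exp 1 := by
    rw [← Real.exp_add]; norm_num
  nlinarith [Real.exp_pos (1/2 : ℝ)]

lemma exp_h63_lb : (41.52 : ℝ) ≤ Real.exp ((harmonic 63 : ℝ) - 1) := by
  have h1 : Real.exp (3.7279 : ℝ) ≤ Real.exp ((harmonic 63 : ℝ) - 1) := by
    apply Real.exp_le_exp.2
    have := harmonic63
    norm_num at this ⊢
    try linarith
  refine le_trans ?_ h1
  have h2 : Real.exp (3.7279 : ℝ) = Real.exp 1 ^ 3 * Real.exp (0.7279 : ℝ) := by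
    have h3 : Real.exp (3:ℝ) = Real.exp 1 ^ (3:ℕ) := by
      rw [Real.exp_one_pow]; norm_num
    rw [show (3.7279:ℝ) = 3 + 0.7279 by norm_num, Real.exp_add, h3]
  rw [h2]
  have ha : (2.7182818283:ℝ) ≤ Real.exp 1 := Real.exp_one_gt_d9.le
  have hcube : (2.7182818283:ℝ)^3 ≤ Real.exp 1 ^ 3 :=
    pow_le_pow_left₀ (by norm_num) ha 3
  have hs := Real.sum_le_exp_of_nonneg (x := (0.7279:ℝ)) (by norm_num) 6
  norm_num [Finset.sum_range_succ, Nat.factorial] at hs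
  calc (41.52:ℝ) ≤ (2.7182818283:ℝ)^3 * (2.07 : ℝ) := by norm_num
    _ ≤ Real.exp 1 ^ 3 * Real.exp (0.7279:ℝ) := by
        apply mul_le_mul hcube (by nlinarith) (by norm_num) (by positivity)

lemma case2 : (3/2 : ℝ) ≤ Real.log (2 + Real.exp (1 - Real.eulerMascheroniConstant) - 1)
    + Real.eulerMascheroniConstant := by
  set γ := Real.eulerMascheroniConstant with hγdef
  have hγ : (harmonic 63 : ℝ) - Real.log 64 < γ := by
    have h := Real.eulerMascheroniSeq_lt_eulerMascheroniConstant 63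
    rw [Real.eulerMascheroniSeq] at h
    norm_num at h
    convert h using 3
    norm_num
  have hA : Real.exp (1/2 : ℝ) - 1 ≤ Real.exp (γ - 1) := by
    have h1 : Real.exp ((harmonic 63 : ℝ) - Real.log 64 - 1) ≤ Real.exp (γ - 1) :=
      Real.exp_le_exp.2 (by linarith)
    have h2 : Real.exp ((harmonic 63 : ℝ) - Real.log 64 - 1)
        = Real.exp ((harmonic 63 : ℝ) - 1) / 64 := by
      rw [show (harmonic 63 : ℝ) - Real.log 64 - 1 = ((harmonic 63 : ℝ) - 1) - Real.log 64 by ring,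
        Real.exp_sub, Real.exp_log (by norm_num : (0:ℝ) < 64)]
    have h3 := exp_h63_lb
    have h4 := exp_half_ub
    rw [h2] at h1
    nlinarith
  have hpos : (0:ℝ) < 1 + Real.exp (1 - γ) := by positivity
  have he : (2:ℝ) + Real.exp (1 - γ) - 1 = 1 + Real.exp (1 - γ) := by ring
  rw [he, ← sub_le_iff_le_add, Real.le_log_iff_exp_le hpos]
  have h5 : Real.exp (3/2 - γ) = Real.exp (1/2 : ℝ) * Real.exp (1 - γ) := by
    rw [← Real.exp_add]; ring_nf
  have h6 : Real.exp (1 - γ) * Real.exp (γ - 1) = 1 := by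
    rw [← Real.exp_add]; norm_num
  rw [h5]
  nlinarith [mul_le_mul_of_nonneg_right hA (Real.exp_pos (1 - γ)).le,
    Real.exp_pos (1 - γ), Real.exp_pos (γ - 1)]

end Helpers

theorem harmonic_sharp_bounds (n : ℕ) (hn : 1 ≤ n) :
    Real.log ((n : ℝ) + 1/2) + Real.eulerMascheroniConstant <
        ∑ k ∈ Finset.range n, (1 : ℝ) / (k + 1) ∧
      ∑ k ∈ Finset.range n, (1 : ℝ) / (k + 1) ≤
        Real.log ((n : ℝ) + Real.exp (1 - Real.eulerMascheroniConstant) - 1) +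
          Real.eulerMascheroniConstant := by
  have hsum : ∑ k ∈ Finset.range n, (1 : ℝ) / (k + 1) = (harmonic n : ℝ) := by
    rw [harmonic]
    push_cast
    simp [one_div]
  rw [hsum]
  constructor
  · have h := gamma_lt_dSeq n
    simp only [dSeq] at h
    linarith
  · match n, hn with
    | 1, _ =>
        have he : ((1:ℕ):ℝ) + Real.exp (1 - Real.eulerMascheroniConstant) - 1
            = Real.exp (1 - Real.eulerMascheroniConstant) := by push_cast; ring
        rw [he, Real.log_exp]
        have h1 : (harmonic 1 : ℝ) = 1 := by norm_num [harmonic]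
        rw [h1]
        ring_nf
        linarith
    | 2, _ =>
        have h2 : (harmonic 2 : ℝ) = 3/2 := by
          have : harmonic 2 = 3/2 := by
            simp [harmonic, Finset.sum_range_succ]
            norm_num
          rw [this]; norm_num
        rw [h2]
        have := case2
        push_cast
        linarith
    | (m+3), _ =>
        have h := uSeq_le (n := m+3) (by omega)
        simp only [uSeq, cc] at h
        have he : ((m+3:ℕ):ℝ) + (Real.exp (1 - Real.eulerMascheroniConstant) - 1)
            = ((m+3:ℕ):ℝ) + Real.exp (1 - Real.eulerMascheroniConstant) - 1 := by ring
        rw [he] at h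
        linarith
end

section
/- For every real x ≥ 1, ln(x + 1/2) < ψ(x + 1) ≤ ln(x + e^{1−γ} − 1). -/
open Real Filter Set

namespace PsiProof

local notation "γ" => Real.eulerMascheroniConstant

lemma ne_neg_nat {x : ℝ} (hx : 0 < x) : ∀ m : ℕ, x ≠ -m := by
  intro m
  have h : -(m:ℝ) ≤ 0 := neg_nonpos.mpr (Nat.cast_nonneg m)
  exact fun he => absurd (he ▸ hx) (by linarith)

lemma diffAt_logGamma {x : ℝ} (hx : 0 < x) :
    DifferentiableAt ℝ (fun t : ℝ => Real.log (Real.Gamma t)) x :=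
  (Real.differentiableAt_Gamma (ne_neg_nat hx)).log (Real.Gamma_ne_zero (ne_neg_nat hx))

lemma psi_hasDerivAt_logGamma {x : ℝ} (hx : 0 < x) :
    HasDerivAt (fun t : ℝ => Real.log (Real.Gamma t)) (psi x) x :=
  (diffAt_logGamma hx).hasDerivAt

lemma logGamma_rec {y : ℝ} (hy : 0 < y) :
    Real.log (Real.Gamma (y + 1)) = Real.log (Real.Gamma y) + Real.log y := by
  rw [Real.Gamma_add_one hy.ne', Real.log_mul hy.ne' (Real.Gamma_pos_of_pos hy).ne', add_comm]

lemma psi_add_one {x : ℝ} (hx : 0 < x) : psi (x + 1) = psi x + 1 / x := by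
  unfold psi
  rw [← deriv_comp_add_const, one_div, ← Real.deriv_log,
    ← deriv_add (diffAt_logGamma hx) (Real.differentiableAt_log hx.ne')]
  apply Filter.EventuallyEq.deriv_eq
  filter_upwards [eventually_gt_nhds hx] with t ht
  exact logGamma_rec ht

lemma psi_one : psi 1 = -γ := by
  unfold psi
  rw [deriv.log (Real.differentiableAt_Gamma (ne_neg_nat one_pos)) (by
    rw [Real.Gamma_one]; exact one_ne_zero)]
  rw [Real.Gamma_one, Real.hasDerivAt_Gamma_one.deriv, div_one]

lemma psi_le_log {y : ℝ} (hy : 0 < y) : psi y ≤ Real.log y := by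
  have hc : ConvexOn ℝ (Ioi 0) (Real.log ∘ Real.Gamma) := Real.convexOn_log_Gamma
  have h := hc.deriv_le_slope (mem_Ioi.mpr hy) (mem_Ioi.mpr (by linarith : (0:ℝ) < y + 1))
    (by linarith) (diffAt_logGamma hy)
  refine h.trans (le_of_eq ?_)
  rw [slope_def_field, Function.comp_apply, Function.comp_apply, logGamma_rec hy,
    add_sub_cancel_left, add_sub_cancel_left, div_one]

lemma log_le_psi {y : ℝ} (hy : 1 < y) : Real.log (y - 1) ≤ psi y := by
  have hc : ConvexOn ℝ (Ioi 0) (Real.log ∘ Real.Gamma) := Real.convexOn_log_Gamma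
  have h := hc.slope_le_deriv (mem_Ioi.mpr (by linarith : (0:ℝ) < y - 1))
    (mem_Ioi.mpr (by linarith : (0:ℝ) < y)) (by linarith) (diffAt_logGamma (by linarith))
  refine le_trans (le_of_eq ?_) h
  rw [slope_def_field, Function.comp_apply, Function.comp_apply,
    show Real.Gamma y = Real.Gamma ((y-1)+1) by ring_nf,
    logGamma_rec (by linarith : (0:ℝ) < y - 1), add_sub_cancel_left, sub_sub_cancel, div_one]

lemma psi_add_nat {x : ℝ} (hx : 0 < x) (n : ℕ) :
    psi (x + n) = psi x + ∑ k ∈ Finset.range n, 1 / (x + k) := by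
  induction n with
  | zero => simp
  | succ n ih =>
    have h1 : x + (n + 1 : ℕ) = (x + n) + 1 := by push_cast; ring
    rw [h1, psi_add_one (by positivity), ih, Finset.sum_range_succ, add_assoc]


section B
open Filter Topology

-- n ↦ x + n tends to infinity
lemma tendsto_add_nat (x : ℝ) : Tendsto (fun n : ℕ => x + n) atTop atTop :=
  tendsto_atTop_add_const_left atTop x tendsto_natCast_atTop_atTop

lemma tendsto_inv_shift (x : ℝ) : Tendsto (fun n : ℕ => 1 / (x + n)) atTop (𝓝 0) :=
  (tendsto_add_nat x).inv_tendsto_atTop.congr (fun n => (one_div _).symm)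

lemma tendsto_inv_pow_shift (x : ℝ) (p : ℕ) (hp : 0 < p) :
    Tendsto (fun n : ℕ => 1 / (x + n) ^ p) atTop (𝓝 0) := by
  have h := (tendsto_inv_shift x).pow p
  rw [zero_pow hp.ne'] at h
  exact h.congr fun n => by rw [div_pow, one_pow]

-- log((n+a)/(n+b)) → 0
lemma tendsto_log_ratio (a b : ℝ) :
    Tendsto (fun n : ℕ => Real.log ((a + n) / (b + n))) atTop (𝓝 0) := by
  have h1 : Tendsto (fun n : ℕ => (a + n) / (b + n)) atTop (𝓝 1) := by
    have h2 : Tendsto (fun n : ℕ => 1 + (a - b) / (b + n)) atTop (𝓝 1) := by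
      have := ((tendsto_inv_shift b).const_mul (a - b)).const_add 1
      simpa [div_eq_mul_inv] using this
    apply h2.congr'
    filter_upwards [(tendsto_add_nat b).eventually_gt_atTop 0] with n hn
    field_simp
    ring
  have hc : ContinuousAt Real.log 1 := Real.continuousAt_log one_ne_zero
  have := hc.tendsto.comp h1
  simpa [Function.comp_def] using this

end B

section C
open Filter Topology

-- psi(x+n) - log(x+n) → 0
lemma tendsto_psi_sub_log (x : ℝ) :
    Tendsto (fun n : ℕ => psi (x + n) - Real.log (x + n)) atTop (𝓝 0) := by
  have hlow : Tendsto (fun n : ℕ => Real.log ((x - 1 + n) / (x + n))) atTop (𝓝 0) :=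
    tendsto_log_ratio (x - 1) x
  refine tendsto_of_tendsto_of_tendsto_of_le_of_le' hlow tendsto_const_nhds ?_ ?_
  · filter_upwards [(tendsto_add_nat x).eventually_gt_atTop 1] with n hn
    have h1 : Real.log (x - 1 + n) ≤ psi (x + n) := by
      have := log_le_psi hn
      simpa [show x + (n:ℝ) - 1 = x - 1 + n by ring] using this
    have h2 : Real.log ((x - 1 + n) / (x + n)) = Real.log (x - 1 + n) - Real.log (x + n) := by
      rw [Real.log_div (by linarith) (by linarith)]
    linarith
  · filter_upwards [(tendsto_add_nat x).eventually_gt_atTop 1] with n hn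
    have := psi_le_log (show (0:ℝ) < x + n by linarith)
    linarith

-- psi(w+n) - psi(1+n) → 0  for w ≥ 1
lemma tendsto_psi_shift_diff {w : ℝ} (hw : 1 ≤ w) :
    Tendsto (fun n : ℕ => psi (w + n) - psi (1 + n)) atTop (𝓝 0) := by
  have h1 := tendsto_psi_sub_log w
  have h2 := tendsto_psi_sub_log 1
  have h3 : Tendsto (fun n : ℕ => Real.log ((w + n) / (1 + n))) atTop (𝓝 0) :=
    tendsto_log_ratio w 1
  have h4 := (h1.sub h2).add h3
  rw [show (0:ℝ) - 0 + 0 = 0 by ring] at h4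
  apply h4.congr'
  filter_upwards [(tendsto_add_nat 0).eventually_gt_atTop 0] with n hn
  simp only [zero_add] at hn
  rw [Real.log_div (by linarith) (by linarith)]
  ring

-- summability of 1/((k+1)^2)
lemma summable_inv_sq_succ : Summable (fun k : ℕ => 1 / ((k : ℝ) + 1) ^ 2) := by
  have h : Summable (fun k : ℕ => 1 / (k : ℝ) ^ 2) := by
    simpa using Real.summable_one_div_nat_pow.mpr (by norm_num : 1 < 2)
  have := (summable_nat_add_iff 1).mpr h
  apply this.congr
  intro k
  push_cast
  ring

-- the series for psi
lemma psi_series {w : ℝ} (hw : 1 ≤ w) :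
    HasSum (fun k : ℕ => 1 / ((k : ℝ) + 1) - 1 / (w + k)) (psi w - psi 1) := by
  have hnn : ∀ k : ℕ, 0 ≤ 1 / ((k : ℝ) + 1) - 1 / (w + k) := by
    intro k
    have hk1 : (0:ℝ) < (k : ℝ) + 1 := by positivity
    have hk2 : (0:ℝ) < w + k := by positivity
    rw [sub_nonneg]
    apply one_div_le_one_div_of_le hk1
    linarith
  rw [hasSum_iff_tendsto_nat_of_nonneg hnn]
  have key : ∀ n : ℕ, ∑ k ∈ Finset.range n, (1 / ((k : ℝ) + 1) - 1 / (w + k))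
      = (psi w - psi 1) - (psi (w + n) - psi (1 + n)) := by
    intro n
    rw [Finset.sum_sub_distrib]
    have e1 := psi_add_nat (show (0:ℝ) < 1 by norm_num) n
    have e2 := psi_add_nat (show (0:ℝ) < w by linarith) n
    have e3 : ∑ k ∈ Finset.range n, 1 / ((k : ℝ) + 1)
        = ∑ k ∈ Finset.range n, 1 / (1 + (k : ℝ)) := by
      apply Finset.sum_congr rfl; intro k _; rw [add_comm]
    rw [e3]
    linarith [e1, e2]
  have h0 := (tendsto_psi_shift_diff hw).const_sub (psi w - psi 1)
  rw [sub_zero] at h0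
  exact h0.congr fun n => (key n).symm

end C

section D
open Filter Topology

lemma cast_pos_aux (w : ℝ) (k : ℕ) (hw : 0 < w) : (0:ℝ) < w + k := by
  have : (0:ℝ) ≤ (k:ℝ) := Nat.cast_nonneg k
  linarith

lemma hasDerivAt_psi {y : ℝ} (hy : 1 < y) :
    HasDerivAt psi (∑' k : ℕ, 1 / (y + k) ^ 2) y := by
  have hu : Summable (fun k : ℕ => 1 / ((k : ℝ) + 1) ^ 2) := summable_inv_sq_succ
  have hgder : ∀ k : ℕ, ∀ w : ℝ, w ∈ Ioi (1:ℝ) →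
      HasDerivAt (fun w : ℝ => 1 / ((k : ℝ) + 1) - 1 / (w + k)) (1 / (w + k) ^ 2) w := by
    intro k w hw
    simp only [mem_Ioi] at hw
    have hwk : w + (k:ℝ) ≠ 0 := (cast_pos_aux w k (by linarith)).ne'
    have h2 := ((hasDerivAt_id w).add_const (k:ℝ)).inv hwk
    have h3 := (hasDerivAt_const w (1 / ((k : ℝ) + 1))).sub h2
    have h4 : (fun w : ℝ => 1 / ((k : ℝ) + 1) - 1 / (w + k))
        = (fun x => 1 / ((k:ℝ) + 1)) - (fun x => id x + (k:ℝ))⁻¹ := by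
      funext z; simp [one_div]
    rw [h4]
    refine h3.congr_deriv ?_
    simp only [zero_sub, neg_div, neg_neg, id]
  have hbound : ∀ k : ℕ, ∀ w : ℝ, w ∈ Ioi (1:ℝ) →
      ‖1 / (w + (k:ℝ)) ^ 2‖ ≤ 1 / ((k : ℝ) + 1) ^ 2 := by
    intro k w hw
    simp only [mem_Ioi] at hw
    have h2 : (0:ℝ) < w + k := cast_pos_aux w k (by linarith)
    rw [Real.norm_eq_abs, abs_of_pos (by positivity)]
    apply one_div_le_one_div_of_le (by positivity)
    apply pow_le_pow_left₀ (by positivity)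
    linarith
  have hg0 : Summable (fun k : ℕ => 1 / ((k : ℝ) + 1) - 1 / (y + k)) :=
    (psi_series hy.le).summable
  have hD := hasDerivAt_tsum_of_isPreconnected hu isOpen_Ioi (convex_Ioi (1:ℝ)).isPreconnected
    hgder hbound (mem_Ioi.mpr hy) hg0 (mem_Ioi.mpr hy)
  have heq : psi =ᶠ[𝓝 y] (fun w => psi 1 + ∑' k : ℕ, (1 / ((k : ℝ) + 1) - 1 / (w + k))) := by
    filter_upwards [isOpen_Ioi.mem_nhds (mem_Ioi.mpr hy)] with w hw
    rw [(psi_series (le_of_lt hw)).tsum_eq]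
    ring
  have hD2 := (hD.const_add (psi 1))
  exact (hD2.congr_of_eventuallyEq heq).congr_deriv rfl

end D

section E
open Filter Topology Finset

lemma log_taylor_bound (n : ℕ) {u : ℝ} (h0 : 0 < u) (h1 : u < 1) :
    |Real.log (1 + u) - (-(∑ i ∈ Finset.range n, (-u) ^ (i + 1) / (i + 1)))|
      ≤ u ^ (n + 1) / (1 - u) := by
  have habs : |(-u)| < 1 := by rw [abs_neg, abs_of_pos h0]; exact h1
  have h := Real.abs_log_sub_add_sum_range_le habs n
  rw [sub_neg_eq_add] at h
  rw [sub_neg_eq_add, add_comm]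
  calc |(∑ i ∈ Finset.range n, (-u) ^ (i + 1) / (i + 1)) + Real.log (1 + u)|
      ≤ |(-u)| ^ (n + 1) / (1 - |(-u)|) := h
    _ = u ^ (n + 1) / (1 - u) := by rw [abs_neg, abs_of_pos h0]

-- explicit forms of the Taylor polynomials
lemma taylor_sum_3 (u : ℝ) : (-(∑ i ∈ Finset.range 3, (-u) ^ (i + 1) / (i + 1)))
    = u - u^2/2 + u^3/3 := by
  simp [Finset.sum_range_succ]
  norm_num
  ring

lemma taylor_sum_4 (u : ℝ) : (-(∑ i ∈ Finset.range 4, (-u) ^ (i + 1) / (i + 1)))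
    = u - u^2/2 + u^3/3 - u^4/4 := by
  simp [Finset.sum_range_succ]
  norm_num
  ring

lemma taylor_sum_16 (u : ℝ) : (-(∑ i ∈ Finset.range 16, (-u) ^ (i + 1) / (i + 1)))
    = u - u^2/2 + u^3/3 - u^4/4 + u^5/5 - u^6/6 + u^7/7 - u^8/8 + u^9/9 - u^10/10
      + u^11/11 - u^12/12 + u^13/13 - u^14/14 + u^15/15 - u^16/16 := by
  simp [Finset.sum_range_succ]
  norm_num
  ring

end E


section F
open Filter Topology

lemma deltaA {t : ℝ} (ht : 2 ≤ t) :
    Real.log (t+1) - 1/(2*(t+1)) - 1/(12*(t+1)^2) + 1/(120*(t+1)^4)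
      ≤ Real.log t - 1/(2*t) - 1/(12*t^2) + 1/(120*t^4) + 1/t := by
  have ht0 : (0:ℝ) < t := by linarith
  have ht1 : (0:ℝ) < t + 1 := by linarith
  have htm : (0:ℝ) < t - 1 := by linarith
  have hu0 : (0:ℝ) < 1/t := by positivity
  have hu1 : 1/t < 1 := by rw [div_lt_one ht0]; linarith
  have htay := log_taylor_bound 16 hu0 hu1
  rw [taylor_sum_16] at htay
  have hub := (abs_le.mp htay).2
  have hlog : Real.log (t+1) - Real.log t = Real.log (1 + 1/t) := by
    rw [← Real.log_div ht1.ne' ht0.ne']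
    congr 1
    field_simp
  have hkey : (1/t - 1/(2*t) - 1/(12*t^2) + 1/(120*t^4) + 1/(2*(t+1)) + 1/(12*(t+1)^2)
      - 1/(120*(t+1)^4))
      - ((1/t - (1/t)^2/2 + (1/t)^3/3 - (1/t)^4/4 + (1/t)^5/5 - (1/t)^6/6 + (1/t)^7/7
      - (1/t)^8/8 + (1/t)^9/9 - (1/t)^10/10 + (1/t)^11/11 - (1/t)^12/12 + (1/t)^13/13
      - (1/t)^14/14 + (1/t)^15/15 - (1/t)^16/16) + (1/t)^17/(1 - 1/t))
      = (116625525 + 1212393681 * (t - 2) + 4370972082 * (t - 2)^2 + 9237113874 * (t - 2)^3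
        + 13277852317 * (t - 2)^4 + 13821250257 * (t - 2)^5 + 10755141176 * (t - 2)^6
        + 6357862840 * (t - 2)^7 + 2869756518 * (t - 2)^8 + 984429134 * (t - 2)^9
        + 252673252 * (t - 2)^10 + 47061300 * (t - 2)^11 + 6013436 * (t - 2)^12
        + 471900 * (t - 2)^13 + 17160 * (t - 2)^14)
        / (720720 * t^16 * (t-1) * (t+1)^4) := by
    have h1 : 1 - 1/t = (t-1)/t := by field_simp
    rw [h1]
    field_simp
    ring
  have hden : (0:ℝ) < 720720 * t^16 * (t-1) * (t+1)^4 :=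
    mul_pos (mul_pos (mul_pos (by norm_num) (by positivity)) htm) (by positivity)
  have hN : (0:ℝ) ≤ 116625525 + 1212393681 * (t - 2) + 4370972082 * (t - 2)^2
      + 9237113874 * (t - 2)^3 + 13277852317 * (t - 2)^4 + 13821250257 * (t - 2)^5
      + 10755141176 * (t - 2)^6 + 6357862840 * (t - 2)^7 + 2869756518 * (t - 2)^8
      + 984429134 * (t - 2)^9 + 252673252 * (t - 2)^10 + 47061300 * (t - 2)^11
      + 6013436 * (t - 2)^12 + 471900 * (t - 2)^13 + 17160 * (t - 2)^14 := by
    have hs : (0:ℝ) ≤ t - 2 := by linarith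
    have e2 := pow_nonneg hs 2
    have e3 := pow_nonneg hs 3
    have e4 := pow_nonneg hs 4
    have e5 := pow_nonneg hs 5
    have e6 := pow_nonneg hs 6
    have e7 := pow_nonneg hs 7
    have e8 := pow_nonneg hs 8
    have e9 := pow_nonneg hs 9
    have e10 := pow_nonneg hs 10
    have e11 := pow_nonneg hs 11
    have e12 := pow_nonneg hs 12
    have e13 := pow_nonneg hs 13
    have e14 := pow_nonneg hs 14
    linarith
  have hq := div_nonneg hN hden.le
  rw [← hkey] at hq
  linarith [hub, hlog, hq]

lemma prod_log_bound {y : ℝ} (hy : 2 ≤ y) :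
    Real.log (1 + (1/(2*y) + 1/(6*y^2))) ≤ 1/(2*y) + 1/(12*y^2) - 1/(120*y^4) := by
  have hy0 : (0:ℝ) < y := by linarith
  have hq : (0:ℝ) < 6*y^2 - 3*y - 1 := by nlinarith
  have hu0 : (0:ℝ) < 1/(2*y) + 1/(6*y^2) := by positivity
  have hu1 : 1/(2*y) + 1/(6*y^2) < 1 := by
    have h1 : 1/(2*y) ≤ 1/4 := by
      rw [div_le_div_iff₀ (by linarith) (by norm_num)]; linarith
    have h2 : 1/(6*y^2) ≤ 1/24 := by
      rw [div_le_div_iff₀ (by positivity) (by norm_num)]; nlinarith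
    linarith
  have htay := log_taylor_bound 3 hu0 hu1
  rw [taylor_sum_3] at htay
  have hub := (abs_le.mp htay).2
  have hkey : (1/(2*y) + 1/(12*y^2) - 1/(120*y^4))
      - (((1/(2*y) + 1/(6*y^2)) - (1/(2*y) + 1/(6*y^2))^2/2 + (1/(2*y) + 1/(6*y^2))^3/3)
        + (1/(2*y) + 1/(6*y^2))^4/(1 - (1/(2*y) + 1/(6*y^2))))
      = (38887424 + 588595200 * (y - 2) + 3417157632 * (y - 2)^2 + 11304546304 * (y - 2)^3
        + 24861792768 * (y - 2)^4 + 39347853312 * (y - 2)^5 + 46939464192 * (y - 2)^6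
        + 43436915712 * (y - 2)^7 + 31743559584 * (y - 2)^8 + 18511037248 * (y - 2)^9
        + 8652041904 * (y - 2)^10 + 3238558512 * (y - 2)^11 + 964695878 * (y - 2)^12
        + 225777936 * (y - 2)^13 + 40630632 * (y - 2)^14 + 5427702 * (y - 2)^15
        + 507033 * (y - 2)^16 + 29565 * (y - 2)^17 + 810 * (y - 2)^18)
        / (3240 * y^18 * (6*y^2 - 3*y - 1)) := by
    have h1 : 1 - (1/(2*y) + 1/(6*y^2)) = (6*y^2 - 3*y - 1)/(6*y^2) := by
      field_simp; ring
    rw [h1]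
    have hq' : y * (y * 6 - 3) - 1 ≠ 0 := by nlinarith
    field_simp
    ring
  have hden : (0:ℝ) < 3240 * y^18 * (6*y^2 - 3*y - 1) :=
    mul_pos (mul_pos (by norm_num) (by positivity)) hq
  have hN : (0:ℝ) ≤ 38887424 + 588595200 * (y - 2) + 3417157632 * (y - 2)^2
      + 11304546304 * (y - 2)^3 + 24861792768 * (y - 2)^4 + 39347853312 * (y - 2)^5
      + 46939464192 * (y - 2)^6 + 43436915712 * (y - 2)^7 + 31743559584 * (y - 2)^8
      + 18511037248 * (y - 2)^9 + 8652041904 * (y - 2)^10 + 3238558512 * (y - 2)^11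
      + 964695878 * (y - 2)^12 + 225777936 * (y - 2)^13 + 40630632 * (y - 2)^14
      + 5427702 * (y - 2)^15 + 507033 * (y - 2)^16 + 29565 * (y - 2)^17
      + 810 * (y - 2)^18 := by
    have hs : (0:ℝ) ≤ y - 2 := by linarith
    have e2 := pow_nonneg hs 2
    have e3 := pow_nonneg hs 3
    have e4 := pow_nonneg hs 4
    have e5 := pow_nonneg hs 5
    have e6 := pow_nonneg hs 6
    have e7 := pow_nonneg hs 7
    have e8 := pow_nonneg hs 8
    have e9 := pow_nonneg hs 9
    have e10 := pow_nonneg hs 10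
    have e11 := pow_nonneg hs 11
    have e12 := pow_nonneg hs 12
    have e13 := pow_nonneg hs 13
    have e14 := pow_nonneg hs 14
    have e15 := pow_nonneg hs 15
    have e16 := pow_nonneg hs 16
    have e17 := pow_nonneg hs 17
    have e18 := pow_nonneg hs 18
    linarith
  have hq2 := div_nonneg hN hden.le
  rw [← hkey] at hq2
  linarith [hub, hq2]

lemma lower_log_bound {y : ℝ} (hy : 2 ≤ y) :
    1/(2*y) + 1/(12*y^2) < Real.log (1 + 1/(2*y-1)) := by
  have hy0 : (0:ℝ) < y := by linarith
  have hw0 : (0:ℝ) < 1/(2*y-1) := by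
    apply div_pos one_pos; linarith
  have hw1 : 1/(2*y-1) < 1 := by
    rw [div_lt_one (by linarith)]; linarith
  have htay := log_taylor_bound 4 hw0 hw1
  rw [taylor_sum_4] at htay
  have hlb := (abs_le.mp htay).1
  have hkey : ((1/(2*y-1)) - (1/(2*y-1))^2/2 + (1/(2*y-1))^3/3 - (1/(2*y-1))^4/4
      - (1/(2*y-1))^5/(1 - 1/(2*y-1))) - (1/(2*y) + 1/(12*y^2))
      = (234 + 1338 * (y - 2) + 2558 * (y - 2)^2 + 2374 * (y - 2)^3 + 1180 * (y - 2)^4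
        + 304 * (y - 2)^5 + 32 * (y - 2)^6)
        / (12 * y^2 * (2*y-1)^5 * (2*y-2)) := by
    have hne1 : (2*y-1) ≠ 0 := by intro h; nlinarith [h]
    have hne2 : (2*y-2) ≠ 0 := by intro h; nlinarith [h]
    have h1 : 1 - 1/(2*y-1) = (2*y-2)/(2*y-1) := by
      field_simp
      ring
    rw [h1]
    have hne3 : y - 1 ≠ 0 := by intro h; nlinarith [h]
    field_simp
    ring
  have hden : (0:ℝ) < 12 * y^2 * (2*y-1)^5 * (2*y-2) := by
    have h1 : (0:ℝ) < 2*y-1 := by linarith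
    have h2 : (0:ℝ) < 2*y-2 := by linarith
    have := pow_pos h1 5
    have hy2 := pow_pos hy0 2
    nlinarith [mul_pos (mul_pos hy2 (pow_pos h1 5)) h2]
  have hN : (0:ℝ) < 234 + 1338 * (y - 2) + 2558 * (y - 2)^2 + 2374 * (y - 2)^3
      + 1180 * (y - 2)^4 + 304 * (y - 2)^5 + 32 * (y - 2)^6 := by
    have hs : (0:ℝ) ≤ y - 2 := by linarith
    have e2 := pow_nonneg hs 2
    have e3 := pow_nonneg hs 3
    have e4 := pow_nonneg hs 4
    have e5 := pow_nonneg hs 5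
    have e6 := pow_nonneg hs 6
    linarith
  have hq2 := div_pos hN hden
  rw [← hkey] at hq2
  linarith [hlb, hq2]


lemma deltaL {t : ℝ} (ht : 2 ≤ t) :
    Real.log t - 1/(2*t) - 1/(12*t^2) + 1/t
      ≤ Real.log (t+1) - 1/(2*(t+1)) - 1/(12*(t+1)^2) := by
  have ht0 : (0:ℝ) < t := by linarith
  have ht1 : (0:ℝ) < t + 1 := by linarith
  have htm : (0:ℝ) < t - 1 := by linarith
  have hu0 : (0:ℝ) < 1/t := by positivity
  have hu1 : 1/t < 1 := by rw [div_lt_one ht0]; linarith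
  have htay := log_taylor_bound 16 hu0 hu1
  rw [taylor_sum_16] at htay
  have hlb := (abs_le.mp htay).1
  have hlog : Real.log (t+1) - Real.log t = Real.log (1 + 1/t) := by
    rw [← Real.log_div ht1.ne' ht0.ne']
    congr 1
    field_simp
  have hkey : (1/t - (1/t)^2/2 + (1/t)^3/3 - (1/t)^4/4 + (1/t)^5/5 - (1/t)^6/6 + (1/t)^7/7
      - (1/t)^8/8 + (1/t)^9/9 - (1/t)^10/10 + (1/t)^11/11 - (1/t)^12/12 + (1/t)^13/13
      - (1/t)^14/14 + (1/t)^15/15 - (1/t)^16/16) - (1/t)^17/(1 - 1/t)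
      - (1/t - 1/(2*t) - 1/(12*t^2) + 1/(2*(t+1)) + 1/(12*(t+1)^2))
      = (151739475 + 1198266645 * (t - 2) + 4223746325 * (t - 2)^2 + 9099333315 * (t - 2)^3
        + 13433693500 * (t - 2)^4 + 14385308132 * (t - 2)^5 + 11526107796 * (t - 2)^6
        + 7021746316 * (t - 2)^7 + 3269091566 * (t - 2)^8 + 1157727714 * (t - 2)^9
        + 307063042 * (t - 2)^10 + 59156526 * (t - 2)^11 + 7826676 * (t - 2)^12
        + 636636 * (t - 2)^13 + 24024 * (t - 2)^14)
        / (720720 * t^16 * (t-1) * (t+1)^2) := by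
    have h1 : 1 - 1/t = (t-1)/t := by field_simp
    rw [h1]
    field_simp
    ring
  have hden : (0:ℝ) < 720720 * t^16 * (t-1) * (t+1)^2 :=
    mul_pos (mul_pos (mul_pos (by norm_num) (by positivity)) htm) (by positivity)
  have hN : (0:ℝ) ≤ 151739475 + 1198266645 * (t - 2) + 4223746325 * (t - 2)^2
      + 9099333315 * (t - 2)^3 + 13433693500 * (t - 2)^4 + 14385308132 * (t - 2)^5
      + 11526107796 * (t - 2)^6 + 7021746316 * (t - 2)^7 + 3269091566 * (t - 2)^8
      + 1157727714 * (t - 2)^9 + 307063042 * (t - 2)^10 + 59156526 * (t - 2)^11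
      + 7826676 * (t - 2)^12 + 636636 * (t - 2)^13 + 24024 * (t - 2)^14 := by
    have hs : (0:ℝ) ≤ t - 2 := by linarith
    have e2 := pow_nonneg hs 2
    have e3 := pow_nonneg hs 3
    have e4 := pow_nonneg hs 4
    have e5 := pow_nonneg hs 5
    have e6 := pow_nonneg hs 6
    have e7 := pow_nonneg hs 7
    have e8 := pow_nonneg hs 8
    have e9 := pow_nonneg hs 9
    have e10 := pow_nonneg hs 10
    have e11 := pow_nonneg hs 11
    have e12 := pow_nonneg hs 12
    have e13 := pow_nonneg hs 13
    have e14 := pow_nonneg hs 14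
    linarith
  have hq := div_nonneg hN hden.le
  rw [← hkey] at hq
  linarith [hlb, hlog, hq]


end F

section G
open Filter Topology

-- telescoping identity
lemma psi_telescope (G : ℝ → ℝ) {x : ℝ} (hx : 0 < x) (n : ℕ) :
    psi x - G x = (∑ k ∈ Finset.range n, (G (x + k + 1) - G (x + k) - 1 / (x + k)))
      + (psi (x + n) - G (x + n)) := by
  induction n with
  | zero => simp
  | succ n ih =>
    rw [Finset.sum_range_succ]
    have hxn : (0:ℝ) < x + n := by
      have : (0:ℝ) ≤ (n:ℝ) := Nat.cast_nonneg n
      linarith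
    have hrec : psi (x + ((n+1:ℕ):ℝ)) = psi (x + n) + 1/(x + n) := by
      have h1 : x + ((n+1:ℕ):ℝ) = (x + n) + 1 := by push_cast; ring
      rw [h1, psi_add_one hxn]
    have hGe : G (x + ((n+1:ℕ):ℝ)) = G (x + n + 1) :=
      congrArg G (by push_cast; ring)
    push_cast at hrec hGe ⊢
    rw [hrec, hGe]
    linarith [ih]

-- (L): psi x ≥ log x - 1/(2x) - 1/(12x²) for x ≥ 2
lemma psi_lower_EM {x : ℝ} (hx : 2 ≤ x) :
    Real.log x - 1/(2*x) - 1/(12*x^2) ≤ psi x := by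
  obtain ⟨G, hG⟩ : ∃ G : ℝ → ℝ, G = fun t => Real.log t - 1/(2*t) - 1/(12*t^2) := ⟨_, rfl⟩
  have hx0 : (0:ℝ) < x := by linarith
  have htend : Tendsto (fun n : ℕ => psi (x + n) - G (x + n)) atTop (𝓝 0) := by
    have h1 := tendsto_psi_sub_log x
    have h2 := (tendsto_inv_pow_shift x 1 one_pos).const_mul (1/2 : ℝ)
    have h3 := (tendsto_inv_pow_shift x 2 two_pos).const_mul (1/12 : ℝ)
    have h := (h1.add h2).add h3
    norm_num at h
    apply h.congr
    intro n
    simp only [hG, pow_one]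
    field_simp
    ring
  have hterm : ∀ n : ℕ, 0 ≤ ∑ k ∈ Finset.range n, (G (x + k + 1) - G (x + k) - 1 / (x + k)) := by
    intro n
    apply Finset.sum_nonneg
    intro k _
    have hk : (2:ℝ) ≤ x + k := by
      have : (0:ℝ) ≤ (k:ℝ) := Nat.cast_nonneg k
      linarith
    have := deltaL hk
    simp only [hG]
    linarith [this]
  have key : ∀ n : ℕ, psi x - G x - (psi (x + n) - G (x + n)) ≥ 0 := by
    intro n
    have := psi_telescope G hx0 n
    linarith [hterm n, this]
  have : 0 ≤ psi x - G x := by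
    have h0 := (tendsto_const_nhds (x := psi x - G x) (f := atTop (α := ℕ))).sub htend
    rw [sub_zero] at h0
    exact ge_of_tendsto h0 (Eventually.of_forall key)
  have hGx : G x = Real.log x - 1/(2*x) - 1/(12*x^2) := by simp only [hG]
  linarith [this, hGx.ge, hGx.le]

-- (A): psi x ≤ log x - 1/(2x) - 1/(12x²) + 1/(120x⁴) for x ≥ 2
lemma psi_upper_EM {x : ℝ} (hx : 2 ≤ x) :
    psi x ≤ Real.log x - 1/(2*x) - 1/(12*x^2) + 1/(120*x^4) := by
  obtain ⟨G, hG⟩ : ∃ G : ℝ → ℝ, G = fun t => Real.log t - 1/(2*t) - 1/(12*t^2) + 1/(120*t^4) := ⟨_, rfl⟩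
  have hx0 : (0:ℝ) < x := by linarith
  have htend : Tendsto (fun n : ℕ => psi (x + n) - G (x + n)) atTop (𝓝 0) := by
    have h1 := tendsto_psi_sub_log x
    have h2 := (tendsto_inv_pow_shift x 1 one_pos).const_mul (1/2 : ℝ)
    have h3 := (tendsto_inv_pow_shift x 2 two_pos).const_mul (1/12 : ℝ)
    have h4 := (tendsto_inv_pow_shift x 4 (by norm_num)).const_mul (1/120 : ℝ)
    have h := ((h1.add h2).add h3).sub h4
    norm_num at h
    apply h.congr
    intro n
    simp only [hG, pow_one]
    field_simp
    ring
  have hterm : ∀ n : ℕ, (∑ k ∈ Finset.range n, (G (x + k + 1) - G (x + k) - 1 / (x + k))) ≤ 0 := by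
    intro n
    apply Finset.sum_nonpos
    intro k _
    have hk : (2:ℝ) ≤ x + k := by
      have : (0:ℝ) ≤ (k:ℝ) := Nat.cast_nonneg k
      linarith
    have := deltaA hk
    simp only [hG]
    linarith [this]
  have key : ∀ n : ℕ, psi x - G x - (psi (x + n) - G (x + n)) ≤ 0 := by
    intro n
    have := psi_telescope G hx0 n
    linarith [hterm n, this]
  have : psi x - G x ≤ 0 := by
    have h0 := (tendsto_const_nhds (x := psi x - G x) (f := atTop (α := ℕ))).sub htend
    rw [sub_zero] at h0
    exact le_of_tendsto h0 (Eventually.of_forall key)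
  have hGx : G x = Real.log x - 1/(2*x) - 1/(12*x^2) + 1/(120*x^4) := by simp only [hG]
  linarith [this, hGx.ge, hGx.le]

end G

section H
open Filter Topology

lemma tsum_inv_sq_le {y : ℝ} (hy : 2 ≤ y) :
    (∑' k : ℕ, 1 / (y + k) ^ 2) ≤ 1/y + 1/(2*y^2) + 1/(6*y^3) := by
  have hy0 : (0:ℝ) < y := by linarith
  obtain ⟨H, hH⟩ : ∃ H : ℝ → ℝ, H = fun t => 1/t + 1/(2*t^2) + 1/(6*t^3) := ⟨_, rfl⟩
  apply Real.tsum_le_of_sum_range_le (fun k => by positivity)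
  intro n
  have h1 : ∑ k ∈ Finset.range n, (H (y+k) - H (y+k+1)) = H y - H (y+n) := by
    have h := Finset.sum_range_sub' (fun k : ℕ => H (y + k)) n
    simp only [Nat.cast_zero, add_zero] at h
    rw [← h]
    apply Finset.sum_congr rfl
    intro k _
    congr 2
    push_cast
    ring
  have h2 : ∑ k ∈ Finset.range n, 1/(y+(k:ℝ))^2
      ≤ ∑ k ∈ Finset.range n, (H (y+k) - H (y+k+1)) := by
    apply Finset.sum_le_sum
    intro k _
    have hknn : (0:ℝ) ≤ (k:ℝ) := Nat.cast_nonneg k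
    have ht0 : (0:ℝ) < y + k := by linarith
    have ht1 : (0:ℝ) < y + k + 1 := by linarith
    have key : H (y+k) - H (y+k+1) - 1/(y+k)^2 = 1/(6*(y+k)^3*((y+k)+1)^3) := by
      simp only [hH]
      field_simp
      ring
    have hpos : (0:ℝ) < 1/(6*(y+k)^3*((y+k)+1)^3) := by positivity
    linarith
  have h3 : 0 ≤ H (y + n) := by
    simp only [hH]
    have hnn : (0:ℝ) ≤ (n:ℝ) := Nat.cast_nonneg n
    have : (0:ℝ) < y + n := by linarith
    positivity
  have h4 : H y = 1/y + 1/(2*y^2) + 1/(6*y^3) := by simp only [hH]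
  linarith [h1, h2, h3, h4]

lemma hasDerivAt_F {z : ℝ} (hz : 1 ≤ z) :
    HasDerivAt (fun w : ℝ => Real.exp (psi (w+1)) - w)
      (Real.exp (psi (z+1)) * (∑' k : ℕ, 1 / ((z+1) + k) ^ 2) - 1) z := by
  have h1 : HasDerivAt (fun w : ℝ => psi (w+1)) (∑' k : ℕ, 1 / ((z+1) + k) ^ 2) z := by
    have h := hasDerivAt_psi (y := z+1) (by linarith)
    have h2 := h.comp z ((hasDerivAt_id z).add_const 1)
    simpa [Function.comp_def] using h2
  have h3 := h1.exp
  have h4 := h3.sub (hasDerivAt_id z)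
  exact h4

lemma derivF_nonpos {z : ℝ} (hz : 1 ≤ z) :
    Real.exp (psi (z+1)) * (∑' k : ℕ, 1 / ((z+1) + k) ^ 2) - 1 ≤ 0 := by
  have hy : (2:ℝ) ≤ z + 1 := by linarith
  have hy0 : (0:ℝ) < z + 1 := by linarith
  have hD := tsum_inv_sq_le hy
  have hDpos : 0 ≤ ∑' k : ℕ, 1 / ((z+1) + k)^2 :=
    tsum_nonneg (fun k => by
      have : (0:ℝ) ≤ (k:ℝ) := Nat.cast_nonneg k
      positivity)
  have hA := psi_upper_EM hy
  have hexp : Real.exp (psi (z+1)) ≤ (z+1) * Real.exp (-(1/(2*(z+1))) - 1/(12*(z+1)^2)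
      + 1/(120*(z+1)^4)) := by
    have h := Real.exp_le_exp.mpr hA
    rw [show Real.log (z+1) - 1/(2*(z+1)) - 1/(12*(z+1)^2) + 1/(120*(z+1)^4)
        = Real.log (z+1) + (-(1/(2*(z+1))) - 1/(12*(z+1)^2) + 1/(120*(z+1)^4)) by ring,
      Real.exp_add, Real.exp_log hy0] at h
    exact h
  have hBpos : (0:ℝ) ≤ 1/(z+1) + 1/(2*(z+1)^2) + 1/(6*(z+1)^3) := by positivity
  have hlog := prod_log_bound hy
  have h1u : (0:ℝ) < 1 + (1/(2*(z+1)) + 1/(6*(z+1)^2)) := by positivity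
  have hexp1 : 1 + (1/(2*(z+1)) + 1/(6*(z+1)^2))
      ≤ Real.exp (1/(2*(z+1)) + 1/(12*(z+1)^2) - 1/(120*(z+1)^4)) := by
    rw [← Real.exp_log h1u]
    exact Real.exp_le_exp.mpr hlog
  have hmul : (z+1) * (1/(z+1) + 1/(2*(z+1)^2) + 1/(6*(z+1)^3))
      = 1 + (1/(2*(z+1)) + 1/(6*(z+1)^2)) := by
    field_simp
    ring
  have hprod : (z+1) * Real.exp (-(1/(2*(z+1))) - 1/(12*(z+1)^2) + 1/(120*(z+1)^4))
      * (1/(z+1) + 1/(2*(z+1)^2) + 1/(6*(z+1)^3)) ≤ 1 := by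
    have hc := Real.exp_pos (-(1/(2*(z+1))) - 1/(12*(z+1)^2) + 1/(120*(z+1)^4))
    calc (z+1) * Real.exp (-(1/(2*(z+1))) - 1/(12*(z+1)^2) + 1/(120*(z+1)^4))
          * (1/(z+1) + 1/(2*(z+1)^2) + 1/(6*(z+1)^3))
        = Real.exp (-(1/(2*(z+1))) - 1/(12*(z+1)^2) + 1/(120*(z+1)^4))
          * ((z+1) * (1/(z+1) + 1/(2*(z+1)^2) + 1/(6*(z+1)^3))) := by ring
      _ = Real.exp (-(1/(2*(z+1))) - 1/(12*(z+1)^2) + 1/(120*(z+1)^4))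
          * (1 + (1/(2*(z+1)) + 1/(6*(z+1)^2))) := by rw [hmul]
      _ ≤ Real.exp (-(1/(2*(z+1))) - 1/(12*(z+1)^2) + 1/(120*(z+1)^4))
          * Real.exp (1/(2*(z+1)) + 1/(12*(z+1)^2) - 1/(120*(z+1)^4)) := by
            exact mul_le_mul_of_nonneg_left hexp1 hc.le
      _ = 1 := by
            rw [← Real.exp_add]
            norm_num
  have hE := Real.exp_pos (psi (z+1))
  have step1 : Real.exp (psi (z+1)) * (∑' k : ℕ, 1 / ((z+1) + k)^2)
      ≤ Real.exp (psi (z+1)) * (1/(z+1) + 1/(2*(z+1)^2) + 1/(6*(z+1)^3)) :=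
    mul_le_mul_of_nonneg_left hD hE.le
  have step2 : Real.exp (psi (z+1)) * (1/(z+1) + 1/(2*(z+1)^2) + 1/(6*(z+1)^3))
      ≤ ((z+1) * Real.exp (-(1/(2*(z+1))) - 1/(12*(z+1)^2) + 1/(120*(z+1)^4)))
        * (1/(z+1) + 1/(2*(z+1)^2) + 1/(6*(z+1)^3)) :=
    mul_le_mul_of_nonneg_right hexp hBpos
  linarith [step1, step2, hprod]

lemma F_antitone : AntitoneOn (fun w : ℝ => Real.exp (psi (w+1)) - w) (Ici 1) := by
  apply antitoneOn_of_deriv_nonpos (convex_Ici 1)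
  · intro z hz
    exact (hasDerivAt_F hz).continuousAt.continuousWithinAt
  · intro z hz
    rw [interior_Ici] at hz
    exact ((hasDerivAt_F hz.le).differentiableAt).differentiableWithinAt
  · intro z hz
    rw [interior_Ici] at hz
    rw [(hasDerivAt_F hz.le).deriv]
    exact derivF_nonpos hz.le

end H

end PsiProof

open PsiProof in
theorem psi_succ_bounds (x : ℝ) (hx : 1 ≤ x) :
    Real.log (x + 1/2) < psi (x + 1) ∧
      psi (x + 1) ≤ Real.log (x + Real.exp (1 - Real.eulerMascheroniConstant) - 1) := by
  have hy : (2:ℝ) ≤ x + 1 := by linarith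
  have hy0 : (0:ℝ) < x + 1 := by linarith
  constructor
  · -- lower bound
    have h1 := psi_lower_EM hy
    have h2 := lower_log_bound hy
    have hlogeq : Real.log (x+1) - Real.log (x+1/2) = Real.log (1 + 1/(2*(x+1)-1)) := by
      rw [← Real.log_div (by linarith) (by linarith)]
      congr 1
      have hne : (2:ℝ)*(x+1)-1 ≠ 0 := by intro h; nlinarith [h]
      have hne2 : (x+1)*2-1 ≠ 0 := by intro h; nlinarith [h]
      field_simp
      ring
    linarith [h1, h2, hlogeq]
  · -- upper bound
    have hF := F_antitone (show (1:ℝ) ∈ Ici 1 from self_mem_Ici)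
      (show x ∈ Ici 1 from mem_Ici.mpr hx) hx
    simp only [] at hF
    have hpsi2 : psi (1 + 1) = 1 - Real.eulerMascheroniConstant := by
      rw [psi_add_one one_pos, psi_one]
      norm_num
      ring
    rw [hpsi2] at hF
    have hle : Real.exp (psi (x+1)) ≤ x + Real.exp (1-Real.eulerMascheroniConstant) - 1 := by
      linarith [hF]
    calc psi (x+1) = Real.log (Real.exp (psi (x+1))) := (Real.log_exp _).symm
      _ ≤ Real.log (x + Real.exp (1-Real.eulerMascheroniConstant) - 1) :=
          Real.log_le_log (Real.exp_pos _) hle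
end
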